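/- arXiv:2311.16188 — 5 statements merged into one kernel-verified Lean document; each statement's English description precedes it below -/
import Mathlib

section
/- For any finite simple graph G, foliage-equivalence is an equivalence relation on the vertex set of G: it is reflexive, symmetric, and transitive. -/
variable {V : Type*}

/-- Local complementation `τ_a(G)`: toggle every edge between distinct neighbors of `a`. -/
def lcomp (G : SimpleGraph V) (a : V) : SimpleGraph V where
  Adj x y := (G.Adj x y ∧ ¬(x ≠ y ∧ G.Adj a x ∧ G.Adj a y)) ∨
             ((x ≠ y ∧ G.Adj a x ∧ G.Adj a y) ∧ ¬ G.Adj x y)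
  symm := by
    constructor
    rintro x y (⟨h1, h2⟩ | ⟨⟨hne, hx, hy⟩, h2⟩)
    · exact Or.inl ⟨h1.symm, fun h => h2 ⟨h.1.symm, h.2.2, h.2.1⟩⟩
    · exact Or.inr ⟨⟨hne.symm, hy, hx⟩, fun h => h2 h.symm⟩
  loopless := by
    constructor
    rintro x (⟨h1, _⟩ | ⟨⟨hne, _, _⟩, _⟩)
    · exact (G.ne_of_adj h1) rfl
    · exact hne rfl

/-- `(l, a)` is a leaf-axil pair: `l` has degree 1 and its unique neighbor is `a`. -/
def IsLeafAxil (G : SimpleGraph V) (l a : V) : Prop :=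
  G.Adj l a ∧ ∀ x, G.Adj l x → x = a

/-- `v` and `w` are twins: `N_v \ {w} = N_w \ {v} ≠ ∅`. -/
def IsTwin (G : SimpleGraph V) (v w : V) : Prop :=
  v ≠ w ∧ G.neighborSet v \ {w} = G.neighborSet w \ {v} ∧
    (G.neighborSet v \ {w}).Nonempty

/-- Foliage equivalence `v ∼_F w`. -/
def FoliageEq (G : SimpleGraph V) (v w : V) : Prop :=
  v = w ∨ IsLeafAxil G v w ∨ IsLeafAxil G w v ∨ IsTwin G v w

lemma twin_symm {G : SimpleGraph V} {v w : V} (h : IsTwin G v w) : IsTwin G w v :=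
  ⟨h.1.symm, h.2.1.symm, h.2.1 ▸ h.2.2⟩

lemma twin_iff {G : SimpleGraph V} {v w : V}
    (h : G.neighborSet v \ {w} = G.neighborSet w \ {v}) :
    ∀ x, (G.Adj v x ∧ x ≠ w) ↔ (G.Adj w x ∧ x ≠ v) := by
  intro x
  have := Set.ext_iff.mp h x
  simpa [Set.mem_diff, SimpleGraph.mem_neighborSet] using this

lemma twin_trans {G : SimpleGraph V} {v w u : V} (h1 : IsTwin G v w) (h2 : IsTwin G w u)
    (hvu : v ≠ u) : IsTwin G v u := by
  obtain ⟨hvw, hs1, hn1⟩ := h1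
  obtain ⟨hwu, hs2, hn2⟩ := h2
  have e1 := twin_iff hs1
  have e2 := twin_iff hs2
  -- Claim A : v adj w → w adj u and u adj v
  have A : G.Adj v w → G.Adj w u ∧ G.Adj u v := by
    intro hadj
    have huv : G.Adj u v := ((e2 v).mp ⟨hadj.symm, hvu⟩).1
    have hwu' : G.Adj w u := ((e1 u).mp ⟨huv.symm, fun h => hwu h.symm⟩).1
    exact ⟨hwu', huv⟩
  have B : G.Adj w u → G.Adj v w ∧ G.Adj v u := by
    intro hadj
    have hvu' : G.Adj v u := ((e1 u).mpr ⟨hadj, hvu.symm⟩).1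
    have := ((e2 v).mpr ⟨hvu'.symm, hvw⟩).1
    exact ⟨this.symm, hvu'⟩
  refine ⟨hvu, ?_, ?_⟩
  · ext x
    simp only [Set.mem_diff, SimpleGraph.mem_neighborSet, Set.mem_singleton_iff]
    constructor
    · rintro ⟨hvx, hxu⟩
      by_cases hxw : x = w
      · subst hxw
        exact ⟨((A hvx).1).symm, hvw.symm⟩
      · have hwx := (e1 x).mp ⟨hvx, hxw⟩
        exact ⟨((e2 x).mp ⟨hwx.1, hxu⟩).1, hvx.ne'⟩
    · rintro ⟨hux, hxv⟩
      by_cases hxw : x = w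
      · subst hxw
        exact ⟨(B hux.symm).1, hwu⟩
      · have hwx := (e2 x).mpr ⟨hux, hxw⟩
        exact ⟨((e1 x).mpr ⟨hwx.1, hxv⟩).1, hwx.2⟩
  · obtain ⟨x, hx⟩ := hn1
    simp only [Set.mem_diff, SimpleGraph.mem_neighborSet, Set.mem_singleton_iff] at hx
    by_cases hxu : x = u
    · -- then v adj u; use hn2
      obtain ⟨y, hy⟩ := hn2
      simp only [Set.mem_diff, SimpleGraph.mem_neighborSet, Set.mem_singleton_iff] at hy
      by_cases hyv : y = v
      · subst hyv
        refine ⟨w, ?_, ?_⟩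
        · exact hy.1.symm
        · simpa using fun h => hwu (h : w = u)
      · refine ⟨y, ?_, ?_⟩
        · exact ((e1 y).mpr ⟨hy.1, hyv⟩).1
        · simpa using hy.2
    · exact ⟨x, hx.1, hxu⟩

/-- foliage-equivalence is an equivalence relation on the vertex set. -/
theorem foliageEq_equivalence {V : Type*} [Fintype V] (G : SimpleGraph V) :
    Equivalence (FoliageEq G) := by
  constructor
  · intro v; exact Or.inl rfl
  · rintro v w (rfl | h | h | h)
    · exact Or.inl rfl
    · exact Or.inr (Or.inr (Or.inl h))
    · exact Or.inr (Or.inl h)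
    · exact Or.inr (Or.inr (Or.inr (twin_symm h)))
  · rintro v w u h h'
    rcases h with rfl | ⟨hadj, huniq⟩ | ⟨hadj, huniq⟩ | htw
    · exact h'
    · -- v leaf, axil w
      rcases h' with rfl | ⟨hadj2, huniq2⟩ | ⟨hadj2, huniq2⟩ | ⟨hwu, hset, hne⟩
      · exact Or.inr (Or.inl ⟨hadj, huniq⟩)
      · exact Or.inl (huniq2 v hadj.symm)
      · -- u leaf, axil w : twins (or equal)
        by_cases hvu : v = u
        · exact Or.inl hvu
        · have hwne : w ≠ u := fun h => hvu ((huniq2 v (h ▸ hadj).symm).trans h)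
          refine Or.inr (Or.inr (Or.inr ⟨hvu, ?_, ⟨w, hadj, by simpa using hwne⟩⟩))
          ext x
          simp only [Set.mem_diff, SimpleGraph.mem_neighborSet, Set.mem_singleton_iff]
          constructor
          · rintro ⟨hvx, _⟩
            have := huniq x hvx
            subst this
            exact ⟨hadj2, hadj.ne'⟩
          · rintro ⟨hux, _⟩
            have := huniq2 x hux
            subst this
            exact ⟨hadj, hadj2.ne'⟩
      · -- w twin u
        refine Or.inl (by_contra fun hvu => ?_)
        have e := twin_iff hset
        have : G.Adj u v := ((e v).mp ⟨hadj.symm, hvu⟩).1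
        exact hwu ((huniq u this.symm).symm)
    · -- w leaf, axil v
      rcases h' with rfl | ⟨hadj2, huniq2⟩ | ⟨hadj2, huniq2⟩ | ⟨hwu, hset, hne⟩
      · exact Or.inr (Or.inr (Or.inl ⟨hadj, huniq⟩))
      · exact Or.inl (huniq u hadj2).symm
      · exact Or.inl (huniq u hadj2.symm).symm
      · -- w twin u ⇒ u leaf, axil v
        have e := twin_iff hset
        obtain ⟨x, hx⟩ := hne
        simp only [Set.mem_diff, SimpleGraph.mem_neighborSet, Set.mem_singleton_iff] at hx
        have hx1 : G.Adj w x := hx.1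
        have hxu : x ≠ u := hx.2
        have hxv : x = v := huniq x hx1
        rw [hxv] at hx1 hxu
        have huv : G.Adj u v := ((e v).mp ⟨hx1, hxu⟩).1
        refine Or.inr (Or.inr (Or.inl ⟨huv, ?_⟩))
        intro y hy
        by_cases hyw : y = w
        · subst hyw
          exact absurd (huniq u hy.symm) (Ne.symm hxu)
        · exact huniq y ((e y).mpr ⟨hy, hyw⟩).1
    · -- v twin w
      obtain ⟨hvw, hset, hne⟩ := htw
      rcases h' with rfl | ⟨hadj2, huniq2⟩ | ⟨hadj2, huniq2⟩ | htw2
      · exact Or.inr (Or.inr (Or.inr ⟨hvw, hset, hne⟩))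
      · -- w leaf, axil u ⇒ v leaf, axil u
        have e := twin_iff hset
        obtain ⟨x, hx⟩ := hne
        simp only [Set.mem_diff, SimpleGraph.mem_neighborSet, Set.mem_singleton_iff] at hx
        have hwx : G.Adj w x ∧ x ≠ v := (e x).mp hx
        have hxu : x = u := huniq2 x hwx.1
        have huv : u ≠ v := hxu ▸ hwx.2
        rw [hxu] at hx
        refine Or.inr (Or.inl ⟨hx.1, ?_⟩)
        intro y hy
        by_cases hyw : y = w
        · subst hyw
          exact absurd (huniq2 v hy.symm) (Ne.symm huv)
        · exact huniq2 y ((e y).mp ⟨hy, hyw⟩).1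
      · -- u leaf, axil w ⇒ v = u
        refine Or.inl (by_contra fun hvu => ?_)
        have e := twin_iff hset
        have : G.Adj v u := ((e u).mpr ⟨hadj2.symm, fun h => hvu h.symm⟩).1
        exact hvw (huniq2 v this.symm)
      · by_cases hvu : v = u
        · exact Or.inl hvu
        · exact Or.inr (Or.inr (Or.inr (twin_trans ⟨hvw, hset, hne⟩ htw2 hvu)))
end

section
/- Let G be a finite simple graph with foliage partition F_W = {W_1, ..., W_k} of its vertex set, and let R = {w_1, ..., w_k} be any choice of representatives with w_i ∈ W_i. Then the foliage graph labeling F_{W,R}(G) — the graph on vertex set R in which w_i and w_j (i ≠ j) are adjacent if and only if some vertex of W_i is adjacent in G to some vertex of W_j — is a vertex-minor of G. -/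
/-- A finite simple graph with an explicit vertex set `verts` inside an ambient type `V`. -/
structure FGraph (V : Type*) where
  verts : Finset V
  Adj : V → V → Prop
  symm : ∀ x y, Adj x y → Adj y x
  loopless : ∀ x, ¬ Adj x x
  mem_of_adj : ∀ x y, Adj x y → x ∈ verts ∧ y ∈ verts

variable {V : Type*}

/-- Local complementation `τ_a(G)`: toggle every edge between distinct neighbors of `a`. -/
def FGraph.lc (G : FGraph V) (a : V) : FGraph V where
  verts := G.verts
  Adj x y := (G.Adj x y ∧ ¬(x ≠ y ∧ G.Adj a x ∧ G.Adj a y)) ∨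
             ((x ≠ y ∧ G.Adj a x ∧ G.Adj a y) ∧ ¬ G.Adj x y)
  symm := by
    rintro x y (⟨h1, h2⟩ | ⟨⟨hne, hx, hy⟩, h2⟩)
    · exact Or.inl ⟨G.symm _ _ h1, fun h => h2 ⟨h.1.symm, h.2.2, h.2.1⟩⟩
    · exact Or.inr ⟨⟨hne.symm, hy, hx⟩, fun h => h2 (G.symm _ _ h)⟩
  loopless := by
    rintro x (⟨h1, _⟩ | ⟨⟨hne, _, _⟩, _⟩)
    · exact G.loopless x h1
    · exact hne rfl
  mem_of_adj := by
    rintro x y (⟨h1, _⟩ | ⟨⟨hne, hx, hy⟩, _⟩)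
    · exact G.mem_of_adj _ _ h1
    · exact ⟨(G.mem_of_adj _ _ hx).2, (G.mem_of_adj _ _ hy).2⟩

/-- Vertex deletion `G \ v`. -/
def FGraph.delete [DecidableEq V] (G : FGraph V) (v : V) : FGraph V where
  verts := G.verts.erase v
  Adj x y := G.Adj x y ∧ x ≠ v ∧ y ≠ v
  symm := by rintro x y ⟨h, hx, hy⟩; exact ⟨G.symm _ _ h, hy, hx⟩
  loopless := by rintro x ⟨h, _⟩; exact G.loopless x h
  mem_of_adj := by
    rintro x y ⟨h, hx, hy⟩
    exact ⟨Finset.mem_erase.2 ⟨hx, (G.mem_of_adj _ _ h).1⟩,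
           Finset.mem_erase.2 ⟨hy, (G.mem_of_adj _ _ h).2⟩⟩

/-- One step: a local complementation or a vertex deletion. -/
def FGraph.Step [DecidableEq V] (G G' : FGraph V) : Prop :=
  (∃ a, G' = G.lc a) ∨ (∃ v, G' = G.delete v)

/-- `H` is a vertex-minor of `G` (written `H < G`): `H` is obtained from `G` by a finite
sequence of local complementations and vertex deletions. -/
def IsVertexMinor [DecidableEq V] (H G : FGraph V) : Prop :=
  Relation.ReflTransGen FGraph.Step G H

/-- `(l, a)` is a leaf-axil pair: `l` has degree 1 and its unique neighbor is `a`. -/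
def FGraph.IsLeafAxil (G : FGraph V) (l a : V) : Prop :=
  G.Adj l a ∧ ∀ x, G.Adj l x → x = a

/-- `v` and `w` are twins: `N_v \ {w} = N_w \ {v} ≠ ∅`. -/
def FGraph.IsTwin (G : FGraph V) (v w : V) : Prop :=
  v ≠ w ∧ {x | G.Adj v x} \ {w} = {x | G.Adj w x} \ {v} ∧
    ({x | G.Adj v x} \ {w}).Nonempty

/-- Foliage equivalence `v ∼_F w`. -/
def FGraph.FoliageEq (G : FGraph V) (v w : V) : Prop :=
  v = w ∨ G.IsLeafAxil v w ∨ G.IsLeafAxil w v ∨ G.IsTwin v w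

/-- `P` is a partition of the set `S`. -/
def IsPartitionOn (P : Set (Set V)) (S : Set V) : Prop :=
  (∀ A ∈ P, A.Nonempty) ∧ (∀ A ∈ P, A ⊆ S) ∧ (∀ v ∈ S, ∃! A, A ∈ P ∧ v ∈ A)

/-- A foliage partition of `G`: a partition of the vertex set each of whose blocks
consists of pairwise foliage-equivalent vertices. -/
def FGraph.IsFoliagePartition (G : FGraph V) (P : Set (Set V)) : Prop :=
  IsPartitionOn P ↑G.verts ∧ ∀ A ∈ P, ∀ v ∈ A, ∀ w ∈ A, G.FoliageEq v w

/-- The foliage graph labeling `F_{W,R}(G)`: the graph on the representative set `R`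
where two representatives are adjacent iff their (distinct) blocks have an edge of `G`
between them. -/
def FGraph.labeling (G : FGraph V) (P : Set (Set V)) (R : Finset V) : FGraph V where
  verts := R
  Adj x y := x ≠ y ∧ x ∈ R ∧ y ∈ R ∧
    ∃ A ∈ P, ∃ B ∈ P, A ≠ B ∧ x ∈ A ∧ y ∈ B ∧ ∃ u ∈ A, ∃ v ∈ B, G.Adj u v
  symm := by
    rintro x y ⟨hne, hx, hy, A, hA, B, hB, hAB, hxA, hyB, u, hu, v, hv, huv⟩
    exact ⟨hne.symm, hy, hx, B, hB, A, hA, hAB.symm, hyB, hxA, v, hv, u, hu, G.symm _ _ huv⟩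
  loopless := by rintro x ⟨hne, _⟩; exact hne rfl
  mem_of_adj := by rintro x y ⟨_, hx, hy, _⟩; exact ⟨hx, hy⟩
section Aux
variable {V : Type*} [DecidableEq V]

lemma FGraph.ext' {G H : FGraph V} (hv : G.verts = H.verts) (ha : G.Adj = H.Adj) : G = H := by
  cases G; cases H
  simp only at hv ha
  subst hv; subst ha
  rfl

/-- Relabel `G` by the transposition `(l a)`. -/
def FGraph.swapG (G : FGraph V) (l a : V) (hl : l ∈ G.verts) (ha : a ∈ G.verts) : FGraph V where
  verts := G.verts
  Adj x y := G.Adj (Equiv.swap l a x) (Equiv.swap l a y)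
  symm := fun x y h => G.symm _ _ h
  loopless := fun x h => G.loopless _ h
  mem_of_adj := by
    intro x y h
    have key : ∀ z : V, Equiv.swap l a z ∈ G.verts → z ∈ G.verts := by
      intro z hz
      by_cases h1 : z = l; · exact h1 ▸ hl
      by_cases h2 : z = a; · exact h2 ▸ ha
      rwa [Equiv.swap_apply_of_ne_of_ne h1 h2] at hz
    obtain ⟨h1, h2⟩ := G.mem_of_adj _ _ h
    exact ⟨key _ h1, key _ h2⟩

set_option maxHeartbeats 1000000 in
lemma FGraph.triple_lc_eq (G : FGraph V) {l a : V} (h : G.IsLeafAxil l a)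
    (hl : l ∈ G.verts) (ha : a ∈ G.verts) :
    ((G.lc a).lc l).lc a = G.swapG l a hl ha := by
  have hla : G.Adj l a := h.1
  have hal : G.Adj a l := G.symm _ _ hla
  have hne : l ≠ a := fun e => G.loopless l (e ▸ hla)
  have leaf : ∀ z, G.Adj l z ↔ z = a := fun z =>
    ⟨h.2 z, fun e => e ▸ hla⟩
  have leaf' : ∀ z, G.Adj z l ↔ z = a := fun z =>
    ⟨fun hz => h.2 z (G.symm _ _ hz), fun e => e ▸ hal⟩
  have hzz : ∀ z, ¬ G.Adj z z := G.loopless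
  have hs : ∀ z w : V, G.Adj z w ↔ G.Adj w z := fun z w => ⟨G.symm _ _, G.symm _ _⟩
  refine FGraph.ext' rfl ?_
  funext x y
  have hsxy := hs x y
  have hsax := hs a x
  have hsay := hs a y
  have hslx := hs l x
  have hsly := hs l y
  apply propext
  by_cases hxy : x = y
  · subst hxy
    constructor
    · intro hcon; exact absurd hcon ((((G.lc a).lc l).lc a).loopless x)
    · intro hcon; exact absurd hcon ((G.swapG l a hl ha).loopless x)
  simp only [FGraph.lc, FGraph.swapG]
  by_cases hx1 : x = l
  · subst hx1
    by_cases hy1 : y = a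
    · subst hy1
      simp [Equiv.swap_apply_left, Equiv.swap_apply_right, hla, hal, hne, leaf, leaf', hzz]
      try tauto
    · rw [Equiv.swap_apply_left, Equiv.swap_apply_of_ne_of_ne (Ne.symm hxy) hy1]
      simp [hla, hal, hne, leaf, leaf', hxy, hy1, hzz]
      try tauto
  · by_cases hx2 : x = a
    · subst hx2
      by_cases hy1 : y = l
      · subst hy1
        rw [Equiv.swap_apply_right, Equiv.swap_apply_left]
        simp [hla, hal, hne, leaf, leaf', hzz]
        try tauto
      · rw [Equiv.swap_apply_right, Equiv.swap_apply_of_ne_of_ne hy1 (Ne.symm hxy)]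
        simp [hla, hal, hne, leaf, leaf', hxy, hy1, hzz]
        try tauto
    · rw [Equiv.swap_apply_of_ne_of_ne hx1 hx2]
      by_cases hy1 : y = l
      · subst hy1
        rw [Equiv.swap_apply_left]
        simp [hla, hal, hne, leaf, leaf', hx1, hx2, hzz]
        try tauto
      · by_cases hy2 : y = a
        · subst hy2
          rw [Equiv.swap_apply_right]
          simp [hla, hal, hne, leaf, leaf', hx1, hx2, hzz]
          try tauto
        · rw [Equiv.swap_apply_of_ne_of_ne hy1 hy2]
          have hx1' : ¬ l = x := fun e => hx1 e.symm
          have hx2' : ¬ a = x := fun e => hx2 e.symm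
          have hy1' : ¬ l = y := fun e => hy1 e.symm
          have hy2' : ¬ a = y := fun e => hy2 e.symm
          simp [hla, hal, hne, leaf, leaf', hx1, hx2, hy1, hy2, hxy, hzz,
            hx1', hx2', hy1', hy2']
          clear hs hsxy hsax hsay hslx hsly leaf leaf' hzz h hla hal
          tauto

lemma swap_reachable (G : FGraph V) {l a : V} (h : G.IsLeafAxil l a)
    (hl : l ∈ G.verts) (ha : a ∈ G.verts) :
    Relation.ReflTransGen FGraph.Step G (G.swapG l a hl ha) := by
  rw [← G.triple_lc_eq h hl ha]
  exact Relation.ReflTransGen.tail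
    (Relation.ReflTransGen.tail
      (Relation.ReflTransGen.tail Relation.ReflTransGen.refl (Or.inl ⟨a, rfl⟩))
      (Or.inl ⟨l, rfl⟩)) (Or.inl ⟨a, rfl⟩)

/-- Delete a whole finite set of vertices. -/
def FGraph.delFinset (G : FGraph V) (D : Finset V) : FGraph V where
  verts := G.verts \ D
  Adj x y := G.Adj x y ∧ x ∉ D ∧ y ∉ D
  symm := fun x y ⟨h, hx, hy⟩ => ⟨G.symm _ _ h, hy, hx⟩
  loopless := fun x h => G.loopless x h.1
  mem_of_adj := fun x y ⟨h, hx, hy⟩ =>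
    ⟨Finset.mem_sdiff.2 ⟨(G.mem_of_adj _ _ h).1, hx⟩,
     Finset.mem_sdiff.2 ⟨(G.mem_of_adj _ _ h).2, hy⟩⟩

lemma FGraph.delFinset_reachable (G : FGraph V) (D : Finset V) :
    Relation.ReflTransGen FGraph.Step G (G.delFinset D) := by
  induction D using Finset.induction_on with
  | empty =>
    have he : G.delFinset ∅ = G := by
      refine FGraph.ext' (by simp [FGraph.delFinset]) ?_
      funext x y
      apply propext
      simp [FGraph.delFinset]
    rw [he]
  | @insert v D hv ih =>
    have he : (G.delFinset D).delete v = G.delFinset (insert v D) := by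
      refine FGraph.ext' ?_ ?_
      · show ((G.verts \ D).erase v) = G.verts \ insert v D
        ext z
        simp only [Finset.mem_erase, Finset.mem_sdiff, Finset.mem_insert]
        tauto
      · funext x y
        apply propext
        show (G.Adj x y ∧ x ∉ D ∧ y ∉ D) ∧ x ≠ v ∧ y ≠ v ↔
          G.Adj x y ∧ x ∉ insert v D ∧ y ∉ insert v D
        simp only [Finset.mem_insert]
        tauto
    rw [← he]
    exact Relation.ReflTransGen.tail ih (Or.inr ⟨v, rfl⟩)

/-- `a` is a connector of the block `A`. -/
def Conn (G : FGraph V) (A : Set V) (a : V) : Prop :=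
  a ∈ A ∧ ∀ v, v ∉ A → ∀ u ∈ A, G.Adj u v → G.Adj a v

/-- `w` is a connector of every block of `P` containing it. -/
def GoodRep (G : FGraph V) (P : Set (Set V)) (w : V) : Prop :=
  ∀ A ∈ P, w ∈ A → ∀ v, v ∉ A → ∀ u ∈ A, G.Adj u v → G.Adj w v

lemma exists_connector (G : FGraph V) (P : Set (Set V)) (hP : G.IsFoliagePartition P)
    {A : Set V} (hA : A ∈ P) {w : V} (hw : w ∈ A) :
    ∃ a, Conn G A a ∧ (a = w ∨ G.IsLeafAxil w a) := by
  have step : ∀ u' ∈ A, ∀ v', v' ∉ A → G.Adj u' v' → ∀ z ∈ A, ¬ G.Adj z v' →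
      G.IsLeafAxil z u' ∨ z = u' := by
    intro u' hu' v' hv' huv' z hz hzv
    rcases hP.2 A hA z hz u' hu' with h0 | hLA | hLA' | hT
    · exact Or.inr h0
    · exact Or.inl hLA
    · exfalso
      have hve : v' = z := hLA'.2 v' huv'
      exact hv' (hve ▸ hz)
    · exfalso
      have hmem : v' ∈ ({x | G.Adj u' x} \ {z} : Set V) := by
        refine ⟨huv', ?_⟩
        simp only [Set.mem_singleton_iff]
        rintro rfl
        exact hv' hz
      rw [← hT.2.1] at hmem
      exact hzv hmem.1
  by_cases hgood : ∀ v, v ∉ A → ∀ u ∈ A, G.Adj u v → G.Adj w v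
  · exact ⟨w, ⟨hw, hgood⟩, Or.inl rfl⟩
  push_neg at hgood
  obtain ⟨v, hv, u, hu, huv, hwv⟩ := hgood
  have hwu : w ≠ u := by rintro rfl; exact hwv huv
  have hLA : G.IsLeafAxil w u := by
    rcases step u hu v hv huv w hw hwv with h' | h'
    · exact h'
    · exact absurd h' hwu
  refine ⟨u, ⟨hu, ?_⟩, Or.inr hLA⟩
  intro v' hv' u'' hu'' h'
  by_contra huv'
  rcases step u'' hu'' v' hv' h' u hu huv' with h2 | h2
  · have hvu : v = u'' := h2.2 v huv
    exact hv (hvu ▸ hu'')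
  · exact huv' (h2 ▸ h')

lemma finalize (G0 G : FGraph V) (P : Set (Set V)) (R : Finset V)
    (hdisj : ∀ A ∈ P, ∀ B ∈ P, ∀ z, z ∈ A → z ∈ B → A = B)
    (hsub : ∀ A ∈ P, A ⊆ ↑G0.verts)
    (hR1 : ∀ A ∈ P, ∃! w, w ∈ A ∧ w ∈ R)
    (hR2 : ∀ w ∈ R, ∃ A ∈ P, w ∈ A)
    (hverts : G.verts = G0.verts)
    (hcross : ∀ A ∈ P, ∀ B ∈ P,
      (∃ u ∈ A, ∃ v ∈ B, G.Adj u v) ↔ (∃ u ∈ A, ∃ v ∈ B, G0.Adj u v))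
    (hgood : ∀ w ∈ R, GoodRep G P w) :
    G.delFinset (G.verts \ R) = G0.labeling P R := by
  have hRsub : R ⊆ G.verts := by
    intro w hw
    obtain ⟨A, hA, hwA⟩ := hR2 w hw
    have : w ∈ ↑G0.verts := hsub A hA hwA
    rw [hverts]; exact this
  refine FGraph.ext' ?_ ?_
  · show G.verts \ (G.verts \ R) = R
    ext z
    simp only [Finset.mem_sdiff, not_and, not_not]
    constructor
    · rintro ⟨h1, h2⟩; exact h2 h1
    · intro h; exact ⟨hRsub h, fun _ => h⟩
  · funext x y
    apply propext
    show G.Adj x y ∧ x ∉ G.verts \ R ∧ y ∉ G.verts \ R ↔ (G0.labeling P R).Adj x y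
    constructor
    · rintro ⟨hadj, hx, hy⟩
      have hxv : x ∈ G.verts := (G.mem_of_adj _ _ hadj).1
      have hyv : y ∈ G.verts := (G.mem_of_adj _ _ hadj).2
      have hxR : x ∈ R := by
        by_contra hc; exact hx (Finset.mem_sdiff.2 ⟨hxv, hc⟩)
      have hyR : y ∈ R := by
        by_contra hc; exact hy (Finset.mem_sdiff.2 ⟨hyv, hc⟩)
      have hxy : x ≠ y := by rintro rfl; exact G.loopless x hadj
      obtain ⟨A, hA, hxA⟩ := hR2 x hxR
      obtain ⟨B, hB, hyB⟩ := hR2 y hyR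
      have hAB : A ≠ B := by
        rintro rfl
        exact hxy ((hR1 A hA).unique ⟨hxA, hxR⟩ ⟨hyB, hyR⟩)
      exact ⟨hxy, hxR, hyR, A, hA, B, hB, hAB, hxA, hyB,
        (hcross A hA B hB).1 ⟨x, hxA, y, hyB, hadj⟩⟩
    · rintro ⟨hne, hxR, hyR, A, hA, B, hB, hAB, hxA, hyB, hcr0⟩
      obtain ⟨u, hu, v, hv, huv⟩ := (hcross A hA B hB).2 hcr0
      have hvA : v ∉ A := fun h => hAB (hdisj A hA B hB v h hv)
      have h1 : G.Adj x v := hgood x hxR A hA hxA v hvA u hu huv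
      have hxB : x ∉ B := fun h => hAB (hdisj A hA B hB x hxA h)
      have h2 : G.Adj y x := hgood y hyR B hB hyB x hxB v hv (G.symm _ _ h1)
      refine ⟨G.symm _ _ h2, ?_, ?_⟩
      · simp [Finset.mem_sdiff, hxR]
      · simp [Finset.mem_sdiff, hyR]

lemma main_induction (G0 : FGraph V) (P : Set (Set V)) (R : Finset V)
    (hdisj : ∀ A ∈ P, ∀ B ∈ P, ∀ z, z ∈ A → z ∈ B → A = B)
    (hsub : ∀ A ∈ P, A ⊆ ↑G0.verts)
    (hR1 : ∀ A ∈ P, ∃! w, w ∈ A ∧ w ∈ R)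
    (hR2 : ∀ w ∈ R, ∃ A ∈ P, w ∈ A) :
    ∀ n (G : FGraph V), G.verts = G0.verts →
      (∀ A ∈ P, ∀ B ∈ P,
        (∃ u ∈ A, ∃ v ∈ B, G.Adj u v) ↔ (∃ u ∈ A, ∃ v ∈ B, G0.Adj u v)) →
      (∀ A ∈ P, ∀ w ∈ A, w ∈ R → ∃ a, Conn G A a ∧ (a = w ∨ G.IsLeafAxil w a)) →
      ∀ S : Finset V, (∀ w ∈ R, ¬ GoodRep G P w → w ∈ S) → S.card ≤ n →
      Relation.ReflTransGen FGraph.Step G (G0.labeling P R) := by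
  intro n
  induction n with
  | zero =>
    intro G hverts hcross hinv S hS hcard
    have hgood : ∀ w ∈ R, GoodRep G P w := by
      intro w hw
      by_contra hbad
      have hmem := hS w hw hbad
      rw [Finset.card_eq_zero.1 (Nat.le_antisymm hcard (Nat.zero_le _))] at hmem
      exact absurd hmem (Finset.notMem_empty w)
    have h := G.delFinset_reachable (G.verts \ R)
    rwa [finalize G0 G P R hdisj hsub hR1 hR2 hverts hcross hgood] at h
  | succ n ih =>
    intro G hverts hcross hinv S hS hcard
    by_cases hgood : ∀ w ∈ R, GoodRep G P w
    · have h := G.delFinset_reachable (G.verts \ R)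
      rwa [finalize G0 G P R hdisj hsub hR1 hR2 hverts hcross hgood] at h
    push_neg at hgood
    obtain ⟨w, hwR, hbad⟩ := hgood
    obtain ⟨A, hA, hwA⟩ := hR2 w hwR
    obtain ⟨a, ⟨haA, hconn⟩, hor⟩ := hinv A hA w hwA hwR
    have hLA : G.IsLeafAxil w a := by
      rcases hor with he | h
      · exfalso
        subst he
        apply hbad
        intro B hB hwB v hv u hu huv
        have hBA : B = A := hdisj B hB A hA _ hwB hwA
        subst hBA
        exact hconn v hv u hu huv
      · exact h
    have hlmem : w ∈ G.verts := (G.mem_of_adj _ _ hLA.1).1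
    have hamem : a ∈ G.verts := (G.mem_of_adj _ _ hLA.1).2
    set σ : V ≃ V := Equiv.swap w a with hσ
    set G' := G.swapG w a hlmem hamem with hG'
    have hreach : Relation.ReflTransGen FGraph.Step G G' := swap_reachable G hLA hlmem hamem
    have hadj' : ∀ x y, G'.Adj x y ↔ G.Adj (σ x) (σ y) := fun x y => Iff.rfl
    have hσσ : ∀ z, σ (σ z) = z := fun z => Equiv.swap_apply_self w a z
    have hσA : ∀ z ∈ A, σ z ∈ A := by
      intro z hz
      by_cases h1 : z = w
      · subst h1; rw [hσ]; rw [Equiv.swap_apply_left]; exact haA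
      by_cases h2 : z = a
      · subst h2; rw [hσ]; rw [Equiv.swap_apply_right]; exact hwA
      rw [hσ, Equiv.swap_apply_of_ne_of_ne h1 h2]; exact hz
    have hfixout : ∀ z, z ∉ A → σ z = z := by
      intro z hz
      rw [hσ]
      refine Equiv.swap_apply_of_ne_of_ne ?_ ?_
      · rintro rfl; exact hz hwA
      · rintro rfl; exact hz haA
    have hfixblk : ∀ B ∈ P, B ≠ A → ∀ z ∈ B, σ z = z := by
      intro B hB hBA z hz
      exact hfixout z (fun hzA => hBA (hdisj B hB A hA z hz hzA))
    have hmapout : ∀ B ∈ P, B ≠ A → ∀ v, v ∉ B → σ v ∉ B := by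
      intro B hB hBA v hv
      by_cases hvA : v ∈ A
      · intro hc
        exact hBA (hdisj B hB A hA (σ v) hc (hσA v hvA))
      · rw [hfixout v hvA]; exact hv
    have hσblock : ∀ B ∈ P, ∀ z ∈ B, σ z ∈ B := by
      intro B hB z hz
      by_cases hBA : B = A
      · subst hBA; exact hσA z hz
      · rw [hfixblk B hB hBA z hz]; exact hz
    have hverts' : G'.verts = G0.verts := hverts
    have hcross' : ∀ A' ∈ P, ∀ B' ∈ P,
        (∃ u ∈ A', ∃ v ∈ B', G'.Adj u v) ↔ (∃ u ∈ A', ∃ v ∈ B', G0.Adj u v) := by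
      intro A' hA' B' hB'
      refine Iff.trans ?_ (hcross A' hA' B' hB')
      constructor
      · rintro ⟨u, hu, v, hv, huv⟩
        exact ⟨σ u, hσblock A' hA' u hu, σ v, hσblock B' hB' v hv, (hadj' u v).1 huv⟩
      · rintro ⟨u, hu, v, hv, huv⟩
        refine ⟨σ u, hσblock A' hA' u hu, σ v, hσblock B' hB' v hv, ?_⟩
        rw [hadj', hσσ, hσσ]
        exact huv
    have hgoodw : GoodRep G' P w := by
      intro B hB hwB v hv u hu huv
      have hBA : B = A := hdisj B hB A hA w hwB hwA
      subst hBA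
      rw [hadj'] at huv ⊢
      rw [hσ, Equiv.swap_apply_left]
      rw [hfixout v hv] at huv ⊢
      exact hconn v hv (σ u) (hσA u hu) huv
    have hinv' : ∀ A' ∈ P, ∀ w' ∈ A', w' ∈ R →
        ∃ a', Conn G' A' a' ∧ (a' = w' ∨ G'.IsLeafAxil w' a') := by
      intro A' hA' w' hw'A hw'R
      by_cases hAA : A' = A
      · subst hAA
        have hww : w' = w := (hR1 A' hA').unique ⟨hw'A, hw'R⟩ ⟨hwA, hwR⟩
        subst hww
        exact ⟨w', ⟨hwA, fun v hv u hu huv => hgoodw A' hA' hwA v hv u hu huv⟩, Or.inl rfl⟩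
      · obtain ⟨a', ⟨ha'A, hconn'⟩, hor'⟩ := hinv A' hA' w' hw'A hw'R
        refine ⟨a', ⟨ha'A, ?_⟩, ?_⟩
        · intro v hv u hu huv
          rw [hadj'] at huv ⊢
          rw [hfixblk A' hA' hAA a' ha'A]
          rw [hfixblk A' hA' hAA u hu] at huv
          exact hconn' (σ v) (hmapout A' hA' hAA v hv) u hu huv
        · rcases hor' with rfl | hL
          · exact Or.inl rfl
          · refine Or.inr ⟨?_, ?_⟩
            · rw [hadj', hfixblk A' hA' hAA w' hw'A, hfixblk A' hA' hAA a' ha'A]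
              exact hL.1
            · intro z hz
              rw [hadj', hfixblk A' hA' hAA w' hw'A] at hz
              have hza : σ z = a' := hL.2 (σ z) hz
              have : σ (σ z) = σ a' := by rw [hza]
              rw [hσσ] at this
              rw [this, hfixblk A' hA' hAA a' ha'A]
    have hS' : ∀ u ∈ R, ¬ GoodRep G' P u → u ∈ S.erase w := by
      intro u huR hbad'
      have hne' : u ≠ w := by
        rintro rfl
        exact hbad' hgoodw
      refine Finset.mem_erase.2 ⟨hne', hS u huR ?_⟩
      intro hgoodu
      apply hbad'
      intro B hB huB v hv u' hu' huv
      have hBA : B ≠ A := by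
        rintro rfl
        exact hne' ((hR1 B hB).unique ⟨huB, huR⟩ ⟨hwA, hwR⟩)
      rw [hadj'] at huv ⊢
      rw [hfixblk B hB hBA u huB]
      rw [hfixblk B hB hBA u' hu'] at huv
      exact hgoodu B hB huB (σ v) (hmapout B hB hBA v hv) u' hu' huv
    have hwS : w ∈ S := hS w hwR hbad
    have hcard' : (S.erase w).card ≤ n := by
      rw [Finset.card_erase_of_mem hwS]
      omega
    exact hreach.trans (ih G' hverts' hcross' hinv' (S.erase w) hS' hcard')

end Aux

/-- the foliage graph labeling is a vertex-minor of `G`. -/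
theorem labeling_isVertexMinor {V : Type*} [DecidableEq V] (G : FGraph V)
    (P : Set (Set V)) (hP : G.IsFoliagePartition P) (R : Finset V)
    (hR1 : ∀ A ∈ P, ∃! w, w ∈ A ∧ w ∈ R)
    (hR2 : ∀ w ∈ R, ∃ A ∈ P, w ∈ A) :
    IsVertexMinor (G.labeling P R) G := by
  classical
  have hsub : ∀ A ∈ P, A ⊆ ↑G.verts := hP.1.2.1
  have hdisj : ∀ A ∈ P, ∀ B ∈ P, ∀ z, z ∈ A → z ∈ B → A = B := by
    intro A hA B hB z hzA hzB
    obtain ⟨C, _, hC⟩ := hP.1.2.2 z (hsub A hA hzA)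
    rw [hC A ⟨hA, hzA⟩, hC B ⟨hB, hzB⟩]
  exact main_induction G P R hdisj hsub hR1 hR2 R.card G rfl
    (fun A _ B _ => Iff.rfl)
    (fun A hA w hwA _ => exists_connector G P hP hA hwA)
    R (fun w hw _ => hw) le_rfl
end

section
/- Let G and G' be finite simple graphs with G' a vertex-minor of G, and let A be a set of vertices of G that are pairwise foliage-equivalent in G. Then exactly one of the following holds for the set A ∩ V(G') of surviving vertices: the vertices of A ∩ V(G') are pairwise foliage-equivalent in G', or every vertex of A ∩ V(G') is isolated in G', or A ∩ V(G') is empty. -/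
variable {V : Type*}

/-- A vertex is isolated if it belongs to the graph but has no neighbors. -/
def FGraph.Isolated (G : FGraph V) (v : V) : Prop :=
  v ∈ G.verts ∧ ∀ w, ¬ G.Adj v w
section Helpers
variable {V : Type*}

/-- Neighborhood of a vertex as a set. -/
def nbhd (H : FGraph V) (v : V) : Set V := {x | H.Adj v x}

lemma mem_nbhd {H : FGraph V} {v x : V} : x ∈ nbhd H v ↔ H.Adj v x := Iff.rfl

lemma not_mem_nbhd_self (H : FGraph V) (v : V) : v ∉ nbhd H v := H.loopless v

lemma adj_symm_iff {H : FGraph V} {v w : V} : H.Adj v w ↔ H.Adj w v :=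
  ⟨H.symm _ _, H.symm _ _⟩

lemma isLeafAxil_iff {H : FGraph V} {l a : V} :
    H.IsLeafAxil l a ↔ nbhd H l = {a} := by
  constructor
  · rintro ⟨h1, h2⟩
    ext x
    simp only [nbhd, Set.mem_setOf_eq, Set.mem_singleton_iff]
    exact ⟨h2 x, fun hx => hx ▸ h1⟩
  · intro h
    refine ⟨?_, ?_⟩
    · have : a ∈ nbhd H l := h ▸ rfl
      exact this
    · intro x hx
      have : x ∈ nbhd H l := hx
      rw [h] at this
      exact this

lemma foliageEq_symm {H : FGraph V} {v w : V} (h : H.FoliageEq v w) : H.FoliageEq w v := by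
  rcases h with h | h | h | ⟨hne, hset, hne'⟩
  · exact Or.inl h.symm
  · exact Or.inr (Or.inr (Or.inl h))
  · exact Or.inr (Or.inl h)
  · exact Or.inr (Or.inr (Or.inr ⟨hne.symm, hset.symm, hset ▸ hne'⟩))

/-- If `v` and `w` are adjacent and the twin set equation holds, they are foliage equivalent. -/
lemma foliage_of_adj_eq {H : FGraph V} {v w : V} (hadj : H.Adj v w)
    (hset : nbhd H v \ {w} = nbhd H w \ {v}) : H.FoliageEq v w := by
  have hne : v ≠ w := fun h => H.loopless v (h ▸ hadj)
  by_cases hnon : (nbhd H v \ {w}).Nonempty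
  · exact Or.inr (Or.inr (Or.inr ⟨hne, hset, hnon⟩))
  · refine Or.inr (Or.inl ⟨hadj, fun x hx => ?_⟩)
    by_contra hxw
    exact hnon ⟨x, hx, hxw⟩

/-- Two distinct vertices with the same nonempty neighborhood are twins. -/
lemma twin_of_common {H : FGraph V} {v w : V} {S : Set V} (hne : v ≠ w)
    (hv : nbhd H v = S) (hw : nbhd H w = S) (hS : S.Nonempty) : H.IsTwin v w := by
  have hvS : v ∉ S := fun h => H.loopless v (by rw [← hv] at h; exact h)
  have hwS : w ∉ S := fun h => H.loopless w (by rw [← hw] at h; exact h)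
  refine ⟨hne, ?_, ?_⟩
  · show nbhd H v \ {w} = nbhd H w \ {v}
    rw [hv, hw]
    ext z
    simp only [Set.mem_diff, Set.mem_singleton_iff]
    constructor
    · rintro ⟨h1, _⟩; exact ⟨h1, fun e => hvS (e ▸ h1)⟩
    · rintro ⟨h1, _⟩; exact ⟨h1, fun e => hwS (e ▸ h1)⟩
  · show (nbhd H v \ {w}).Nonempty
    rw [hv]
    obtain ⟨s, hs⟩ := hS
    exact ⟨s, hs, fun e => hwS (e ▸ hs)⟩

lemma lc_nbhd_of_not_adj {H : FGraph V} {p x : V} (h : ¬ H.Adj p x) :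
    nbhd (H.lc p) x = nbhd H x := by
  ext z
  simp only [nbhd, FGraph.lc, Set.mem_setOf_eq]
  constructor
  · rintro (⟨h1, _⟩ | ⟨⟨_, hx, _⟩, _⟩)
    · exact h1
    · exact absurd hx h
  · intro h1
    exact Or.inl ⟨h1, fun hc => h hc.2.1⟩

lemma lc_nbhd_of_adj {H : FGraph V} {p x : V} (h : H.Adj p x) :
    nbhd (H.lc p) x = (nbhd H x \ nbhd H p) ∪ (nbhd H p \ ({x} ∪ nbhd H x)) := by
  ext z
  simp only [nbhd, FGraph.lc, Set.mem_setOf_eq, Set.mem_union, Set.mem_diff,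
    Set.mem_singleton_iff, Set.mem_union]
  constructor
  · rintro (⟨h1, h2⟩ | ⟨⟨hne, _, hpz⟩, h2⟩)
    · left
      refine ⟨h1, fun hpz => h2 ⟨fun e => H.loopless x (e ▸ h1), h, hpz⟩⟩
    · right
      exact ⟨hpz, fun hc => hc.elim (fun e => hne e.symm) h2⟩
  · rintro (⟨h1, h2⟩ | ⟨h1, h2⟩)
    · exact Or.inl ⟨h1, fun hc => h2 hc.2.2⟩
    · exact Or.inr ⟨⟨fun e => h2 (Or.inl e.symm), h, h1⟩, fun hc => h2 (Or.inr hc)⟩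

lemma delete_nbhd [DecidableEq V] {H : FGraph V} {u x : V} (h : x ≠ u) :
    nbhd (H.delete u) x = nbhd H x \ {u} := by
  ext z
  simp only [nbhd, FGraph.delete, Set.mem_setOf_eq, Set.mem_diff, Set.mem_singleton_iff]
  constructor
  · rintro ⟨h1, _, h3⟩; exact ⟨h1, h3⟩
  · rintro ⟨h1, h2⟩; exact ⟨h1, h, h2⟩

end Helpers
section Classify
variable {V : Type*}

/-- Classification of sets of pairwise foliage-equivalent vertices containing two
distinct vertices: a star, an independent twin class, or a clique twin class. -/
lemma classify {H : FGraph V} {B : Set V}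
    (hfol : ∀ v ∈ B, ∀ w ∈ B, v ≠ w → H.FoliageEq v w)
    (hex : ∃ x ∈ B, ∃ y ∈ B, x ≠ y) :
    (∃ a ∈ B, ∀ l ∈ B, l ≠ a → H.IsLeafAxil l a) ∨
    (∃ S : Set V, S.Nonempty ∧ ∀ x ∈ B, nbhd H x = S) ∨
    (∃ T : Set V, (∀ x ∈ B, x ∉ T) ∧ ∀ x ∈ B, nbhd H x = T ∪ (B \ {x})) := by
  by_cases hleaf : ∃ l ∈ B, ∃ a ∈ B, H.IsLeafAxil l a
  · left
    obtain ⟨l, hl, a, ha, hla⟩ := hleaf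
    have hNl : nbhd H l = {a} := isLeafAxil_iff.mp hla
    have hlne : l ≠ a := fun e => H.loopless l (e ▸ hla.1)
    refine ⟨a, ha, fun x hx hxa => ?_⟩
    by_cases hxl : x = l
    · exact hxl ▸ hla
    · rcases hfol x hx l hl hxl with h | h | h | ⟨hne, hset, hne'⟩
      · exact absurd h hxl
      · -- x is a leaf with axil l : then Adj l x so x = a, contradiction
        have : x = a := hla.2 x (H.symm _ _ h.1)
        exact absurd this hxa
      · have : x = a := hla.2 x h.1
        exact absurd this hxa
      · -- twins l x
        have hset2 : nbhd H x \ {l} = nbhd H l \ {x} := hset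
        have hLHS : nbhd H l \ {x} = {a} := by
          rw [hNl]
          ext z
          simp only [Set.mem_diff, Set.mem_singleton_iff]
          exact ⟨fun h => h.1, fun h => ⟨h, fun e => hxa (e ▸ h)⟩⟩
        have hxNot : l ∉ nbhd H x := by
          intro hc
          have : x = a := hla.2 x (H.symm _ _ hc)
          exact hxa this
        have hNx : nbhd H x = {a} := by
          have h1 : nbhd H x \ {l} = {a} := by rw [hset2]; exact hLHS
          ext z
          constructor
          · intro hz
            have : z ∈ nbhd H x \ {l} := ⟨hz, fun e => hxNot (e ▸ hz)⟩
            rw [h1] at this; exact this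
          · intro hz
            have : z ∈ nbhd H x \ {l} := h1 ▸ hz
            exact this.1
        exact isLeafAxil_iff.mpr hNx
  · -- no leaf-axil pair inside B: all distinct pairs are twins
    push_neg at hleaf
    have htwin : ∀ v ∈ B, ∀ w ∈ B, v ≠ w → H.IsTwin v w := by
      intro v hv w hw hvw
      rcases hfol v hv w hw hvw with h | h | h | h
      · exact absurd h hvw
      · exact absurd h (hleaf v hv w hw)
      · exact absurd h (hleaf w hw v hv)
      · exact h
    -- propagation of adjacency
    have hprop : ∀ u ∈ B, ∀ w ∈ B, ∀ z ∈ B, H.Adj u w → z ≠ u → H.Adj u z := by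
      intro u hu w hw z hz hadj hzu
      by_cases hzw : z = w
      · exact hzw ▸ hadj
      · have ht := htwin w hw z hz (Ne.symm hzw)
        have : u ∈ nbhd H w \ {z} := ⟨H.symm _ _ hadj, fun e => hzu e.symm⟩
        have heq : nbhd H w \ {z} = nbhd H z \ {w} := ht.2.1
        rw [heq] at this
        exact H.symm _ _ this.1
    obtain ⟨x₀, hx₀, y₀, hy₀, hxy₀⟩ := hex
    -- any two distinct vertices of B have the same adjacency status
    have hiff : ∀ v ∈ B, ∀ w ∈ B, v ≠ w → H.Adj v w → H.Adj x₀ y₀ := by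
      intro v hv w hw hvw hadj
      have key : ∃ t ∈ B, t ≠ x₀ ∧ H.Adj x₀ t := by
        by_cases hvx : v = x₀
        · exact ⟨w, hw, fun e => hvw (hvx.trans e.symm), hvx ▸ hadj⟩
        · by_cases hwx : w = x₀
          · exact ⟨v, hv, hvx, H.symm _ _ (hwx ▸ hadj)⟩
          · have h1 : H.Adj v x₀ := hprop v hv w hw x₀ hx₀ hadj (Ne.symm hvx)
            exact ⟨v, hv, hvx, H.symm _ _ h1⟩
      obtain ⟨t, ht, htx, hadjt⟩ := key
      by_cases hty : t = y₀
      · exact hty ▸ hadjt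
      · exact hprop x₀ hx₀ t ht y₀ hy₀ hadjt (Ne.symm hxy₀)
    by_cases hadj0 : H.Adj x₀ y₀
    · -- clique case
      have hAdjAll : ∀ v ∈ B, ∀ w ∈ B, v ≠ w → H.Adj v w := by
        intro v hv w hw hvw
        by_cases hvx : v = x₀
        · subst hvx
          by_cases hwy : w = y₀
          · exact hwy ▸ hadj0
          · exact hprop v hv y₀ hy₀ w hw hadj0 (Ne.symm hvw)
        · have h1 : H.Adj x₀ v := by
            by_cases hvy : v = y₀
            · exact hvy ▸ hadj0
            · exact hprop x₀ hx₀ y₀ hy₀ v hv hadj0 hvx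
          by_cases hwv : w = x₀
          · exact hwv ▸ H.symm _ _ h1
          · exact hprop v hv x₀ hx₀ w hw (H.symm _ _ h1) (Ne.symm hvw)
      right; right
      refine ⟨nbhd H x₀ \ B, fun x hx hc => hc.2 hx, fun x hx => ?_⟩
      ext z
      by_cases hzB : z ∈ B
      · simp only [Set.mem_union, Set.mem_diff, Set.mem_singleton_iff]
        constructor
        · intro hz
          exact Or.inr ⟨hzB, fun e => H.loopless x (e ▸ hz)⟩
        · rintro (⟨_, hc⟩ | ⟨_, hzx⟩)
          · exact absurd hzB hc
          · exact hAdjAll x hx z hzB (Ne.symm hzx)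
      · simp only [Set.mem_union, Set.mem_diff, Set.mem_singleton_iff]
        constructor
        · intro hz
          refine Or.inl ⟨?_, hzB⟩
          by_cases hxx : x = x₀
          · exact hxx ▸ hz
          · have ht := htwin x hx x₀ hx₀ hxx
            have : z ∈ nbhd H x \ {x₀} := ⟨hz, fun e => hzB (e ▸ hx₀)⟩
            have heq : nbhd H _ \ {_} = nbhd H _ \ {_} := ht.2.1
            rw [heq] at this
            exact this.1
        · rintro (⟨hz, _⟩ | ⟨hzB', _⟩)
          · by_cases hxx : x = x₀
            · exact hxx ▸ hz
            · have ht := htwin x₀ hx₀ x hx (fun e => hxx e.symm)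
              have : z ∈ nbhd H x₀ \ {x} := ⟨hz, fun e => hzB (e ▸ hx)⟩
              have heq : nbhd H _ \ {_} = nbhd H _ \ {_} := ht.2.1
              rw [heq] at this
              exact this.1
          · exact absurd hzB' hzB
    · -- independent case
      have hIndep : ∀ v ∈ B, ∀ w ∈ B, ¬ H.Adj v w := by
        intro v hv w hw hadj
        have hvw : v ≠ w := fun e => H.loopless v (e ▸ hadj)
        exact hadj0 (hiff v hv w hw hvw hadj)
      right; left
      have hcommon : ∀ x ∈ B, nbhd H x = nbhd H x₀ := by
        intro x hx
        by_cases hxx : x = x₀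
        · exact hxx ▸ rfl
        · have ht := htwin x hx x₀ hx₀ hxx
          ext z
          constructor
          · intro hz
            have : z ∈ nbhd H x \ {x₀} := ⟨hz, fun e => hIndep x hx x₀ hx₀ (e ▸ hz)⟩
            have heq : nbhd H _ \ {_} = nbhd H _ \ {_} := ht.2.1
            rw [heq] at this
            exact this.1
          · intro hz
            have : z ∈ nbhd H x₀ \ {x} := ⟨hz, fun e => hIndep x₀ hx₀ x hx (e ▸ hz)⟩
            have heq : nbhd H _ \ {_} = nbhd H _ \ {_} := ht.2.1
            rw [← heq] at this
            exact this.1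
      have hne : (nbhd H x₀).Nonempty := by
        obtain ⟨s, hs⟩ := (htwin x₀ hx₀ y₀ hy₀ hxy₀).2.2
        exact ⟨s, hs.1⟩
      exact ⟨nbhd H x₀, hne, hcommon⟩

end Classify
section StepCases
variable {V : Type*}

/-- Star case under local complementation. -/
lemma lc_star {H : FGraph V} {B : Set V} {a₀ : V} (p : V)
    (hstar : ∀ l ∈ B, l ≠ a₀ → H.IsLeafAxil l a₀) :
    ∀ v ∈ B, ∀ w ∈ B, v ≠ w → (H.lc p).FoliageEq v w := by
  have hpp := not_mem_nbhd_self H p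
  by_cases hpa : p = a₀
  · subst hpa
    have hleafN : ∀ l ∈ B, l ≠ p → nbhd (H.lc p) l = {p} ∪ (nbhd H p \ {l}) := by
      intro l hl hlp
      have hla := hstar l hl hlp
      have hNl : nbhd H l = {p} := isLeafAxil_iff.mp hla
      have hadj : H.Adj p l := H.symm _ _ hla.1
      rw [lc_nbhd_of_adj hadj, hNl]
      ext z
      by_cases hzp : z = p
      · subst hzp
        simp only [Set.mem_union, Set.mem_diff, Set.mem_singleton_iff]
        tauto
      · simp only [Set.mem_union, Set.mem_diff, Set.mem_singleton_iff]
        tauto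
    have haxN : nbhd (H.lc p) p = nbhd H p := lc_nbhd_of_not_adj (H.loopless p)
    intro v hv w hw hvw
    by_cases hvp : v = p
    · subst hvp
      -- w is a leaf; show FoliageEq v w via adjacency pair
      have hNw := hleafN w hw (Ne.symm hvw)
      have hadj : (H.lc v).Adj v w := by
        have : v ∈ nbhd (H.lc v) w := by
          rw [hNw]; exact Or.inl rfl
        exact (H.lc v).symm _ _ this
      apply foliage_of_adj_eq hadj
      rw [hNw, haxN]
      ext z
      by_cases hzw : z = w <;> by_cases hzv : z = v <;>
        simp only [Set.mem_diff, Set.mem_union, Set.mem_singleton_iff] <;>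
        subst_vars <;> tauto
    · by_cases hwp : w = p
      · subst hwp
        have hNv := hleafN v hv hvp
        have hadj : (H.lc w).Adj v w := by
          show w ∈ nbhd (H.lc w) v
          rw [hNv]; exact Or.inl rfl
        apply foliage_of_adj_eq hadj
        rw [hNv, haxN]
        ext z
        by_cases hzw : z = w <;> by_cases hzv : z = v <;>
          simp only [Set.mem_diff, Set.mem_union, Set.mem_singleton_iff] <;>
          subst_vars <;> tauto
      · -- two leaves
        have hNv := hleafN v hv hvp
        have hNw := hleafN w hw hwp
        have hwN : w ∈ nbhd H p := H.symm _ _ (hstar w hw hwp).1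
        have hadj : (H.lc p).Adj v w := by
          show w ∈ nbhd (H.lc p) v
          rw [hNv]
          exact Or.inr ⟨hwN, fun e => hvw e.symm⟩
        apply foliage_of_adj_eq hadj
        rw [hNv, hNw]
        ext z
        by_cases hzw : z = w <;> by_cases hzv : z = v <;> by_cases hzp : z = p <;>
          simp only [Set.mem_diff, Set.mem_union, Set.mem_singleton_iff] <;>
          subst_vars <;> tauto
  · -- pivot is not the axil: leaves untouched
    have hleafN : ∀ l ∈ B, l ≠ a₀ → nbhd (H.lc p) l = {a₀} := by
      intro l hl hla
      have hNl : nbhd H l = {a₀} := isLeafAxil_iff.mp (hstar l hl hla)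
      have hnadj : ¬ H.Adj p l := by
        intro hc
        have : p ∈ nbhd H l := H.symm _ _ hc
        rw [hNl] at this
        exact hpa this
      rw [lc_nbhd_of_not_adj hnadj, hNl]
    intro v hv w hw hvw
    by_cases hva : v = a₀
    · subst hva
      have := isLeafAxil_iff.mpr (hleafN w hw (Ne.symm hvw))
      exact Or.inr (Or.inr (Or.inl this))
    · by_cases hwa : w = a₀
      · subst hwa
        exact Or.inr (Or.inl (isLeafAxil_iff.mpr (hleafN v hv hva)))
      · have h1 := hleafN v hv hva
        have h2 := hleafN w hw hwa
        exact Or.inr (Or.inr (Or.inr (twin_of_common hvw h1 h2 ⟨a₀, rfl⟩)))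

/-- Independent twin class under local complementation. -/
lemma lc_indep {H : FGraph V} {B : Set V} {S : Set V} (p : V) (hSne : S.Nonempty)
    (hcom : ∀ x ∈ B, nbhd H x = S) :
    ∀ v ∈ B, ∀ w ∈ B, v ≠ w → (H.lc p).FoliageEq v w := by
  have hBS : ∀ x ∈ B, x ∉ S := by
    intro x hx hc
    exact H.loopless x (by rw [← hcom x hx] at hc; exact hc)
  by_cases hpS : p ∈ S
  · -- pivot adjacent to all of B
    have hadjall : ∀ x ∈ B, H.Adj p x := by
      intro x hx
      exact H.symm _ _ (by rw [← hcom x hx] at hpS; exact hpS)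
    have hN : ∀ x ∈ B, nbhd (H.lc p) x = ((S \ nbhd H p) ∪ (nbhd H p \ S)) \ {x} := by
      intro x hx
      have hxS := hBS x hx
      have hxNp : x ∈ nbhd H p := hadjall x hx
      rw [lc_nbhd_of_adj (hadjall x hx), hcom x hx]
      ext z
      by_cases hzx : z = x <;>
        simp only [Set.mem_union, Set.mem_diff, Set.mem_singleton_iff] <;>
        subst_vars <;> tauto
    intro v hv w hw hvw
    have hNv := hN v hv
    have hNw := hN w hw
    have hadj : (H.lc p).Adj v w := by
      show w ∈ nbhd (H.lc p) v
      rw [hNv]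
      refine ⟨Or.inr ⟨hadjall w hw, hBS w hw⟩, fun e => hvw e.symm⟩
    apply foliage_of_adj_eq hadj
    rw [hNv, hNw]
    ext z
    by_cases hzv : z = v <;> by_cases hzw : z = w <;>
      simp only [Set.mem_diff, Set.mem_singleton_iff] <;> subst_vars <;> tauto
  · -- pivot untouched
    have hN : ∀ x ∈ B, nbhd (H.lc p) x = S := by
      intro x hx
      have hnadj : ¬ H.Adj p x := by
        intro hc
        apply hpS
        rw [← hcom x hx]
        exact H.symm _ _ hc
      rw [lc_nbhd_of_not_adj hnadj, hcom x hx]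
    intro v hv w hw hvw
    exact Or.inr (Or.inr (Or.inr (twin_of_common hvw (hN v hv) (hN w hw) hSne)))

/-- Clique twin class under local complementation. -/
lemma lc_clique {H : FGraph V} {B : Set V} {T : Set V} (p : V)
    (hTB : ∀ x ∈ B, x ∉ T) (hcl : ∀ x ∈ B, nbhd H x = T ∪ (B \ {x})) :
    ∀ v ∈ B, ∀ w ∈ B, v ≠ w → (H.lc p).FoliageEq v w := by
  have hpp := not_mem_nbhd_self H p
  by_cases hpB : p ∈ B
  · -- every other vertex of B becomes a leaf with axil p
    have hN : ∀ x ∈ B, x ≠ p → nbhd (H.lc p) x = {p} := by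
      intro x hx hxp
      have hadj : H.Adj p x := by
        have : x ∈ nbhd H p := by
          rw [hcl p hpB]; exact Or.inr ⟨hx, hxp⟩
        exact this
      rw [lc_nbhd_of_adj hadj, hcl x hx, hcl p hpB]
      have hxT := hTB x hx
      have hpT := hTB p hpB
      ext z
      by_cases hzp : z = p <;> by_cases hzx : z = x <;>
        simp only [Set.mem_union, Set.mem_diff, Set.mem_singleton_iff] <;>
        subst_vars <;> tauto
    intro v hv w hw hvw
    by_cases hvp : v = p
    · subst hvp
      exact Or.inr (Or.inr (Or.inl (isLeafAxil_iff.mpr (hN w hw (Ne.symm hvw)))))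
    · by_cases hwp : w = p
      · subst hwp
        exact Or.inr (Or.inl (isLeafAxil_iff.mpr (hN v hv hvp)))
      · exact Or.inr (Or.inr (Or.inr
          (twin_of_common hvw (hN v hv hvp) (hN w hw hwp) ⟨p, rfl⟩)))
  · by_cases hpT : p ∈ T
    · -- pivot adjacent to all of B; B becomes an independent twin class
      have hadjall : ∀ x ∈ B, H.Adj p x := by
        intro x hx
        have : p ∈ nbhd H x := by rw [hcl x hx]; exact Or.inl hpT
        exact H.symm _ _ this
      have hN : ∀ x ∈ B, nbhd (H.lc p) x = (T \ nbhd H p) ∪ (nbhd H p \ (T ∪ B)) := by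
        intro x hx
        rw [lc_nbhd_of_adj (hadjall x hx), hcl x hx]
        have hxT := hTB x hx
        have hBNp : ∀ y ∈ B, y ∈ nbhd H p := fun y hy => hadjall y hy
        ext z
        by_cases hzB : z ∈ B
        · have hzNp := hBNp z hzB
          by_cases hzx : z = x <;>
            simp only [Set.mem_union, Set.mem_diff, Set.mem_singleton_iff] <;>
            subst_vars <;> tauto
        · by_cases hzx : z = x <;>
            simp only [Set.mem_union, Set.mem_diff, Set.mem_singleton_iff] <;>
            subst_vars <;> tauto
      intro v hv w hw hvw
      have hSne : ((T \ nbhd H p) ∪ (nbhd H p \ (T ∪ B))).Nonempty :=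
        ⟨p, Or.inl ⟨hpT, hpp⟩⟩
      exact Or.inr (Or.inr (Or.inr (twin_of_common hvw (hN v hv) (hN w hw) hSne)))
    · -- pivot untouched
      have hN : ∀ x ∈ B, nbhd (H.lc p) x = T ∪ (B \ {x}) := by
        intro x hx
        have hnadj : ¬ H.Adj p x := by
          intro hc
          have : p ∈ nbhd H x := H.symm _ _ hc
          rw [hcl x hx] at this
          rcases this with h | h
          · exact hpT h
          · exact hpB h.1
        rw [lc_nbhd_of_not_adj hnadj, hcl x hx]
      intro v hv w hw hvw
      have hadj : (H.lc p).Adj v w := by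
        show w ∈ nbhd (H.lc p) v
        rw [hN v hv]
        exact Or.inr ⟨hw, fun e => hvw e.symm⟩
      apply foliage_of_adj_eq hadj
      rw [hN v hv, hN w hw]
      have hvT := hTB v hv
      have hwT := hTB w hw
      ext z
      by_cases hzv : z = v <;> by_cases hzw : z = w <;>
        simp only [Set.mem_union, Set.mem_diff, Set.mem_singleton_iff] <;>
        subst_vars <;> tauto

end StepCases
section DeleteCases
variable {V : Type*} [DecidableEq V]

/-- Star case under vertex deletion. -/
lemma del_star {H : FGraph V} {B : Set V} {a₀ : V} (u : V) (hB : B ⊆ ↑H.verts)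
    (hstar : ∀ l ∈ B, l ≠ a₀ → H.IsLeafAxil l a₀) :
    (∀ v ∈ B, v ≠ u → ∀ w ∈ B, w ≠ u → v ≠ w → (H.delete u).FoliageEq v w) ∨
    (∀ v ∈ B, v ≠ u → (H.delete u).Isolated v) := by
  by_cases hua : u = a₀
  · subst hua
    right
    intro v hv hvu
    refine ⟨Finset.mem_erase.mpr ⟨hvu, hB hv⟩, fun z hz => ?_⟩
    have hNv : nbhd H v = {u} := isLeafAxil_iff.mp (hstar v hv hvu)
    have : z ∈ nbhd (H.delete u) v := hz
    rw [delete_nbhd hvu, hNv] at this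
    exact this.2 this.1
  · left
    intro v hv hvu w hw hwu hvw
    have hleafN : ∀ l ∈ B, l ≠ a₀ → l ≠ u → nbhd (H.delete u) l = {a₀} := by
      intro l hl hla hlu
      rw [delete_nbhd hlu, isLeafAxil_iff.mp (hstar l hl hla)]
      ext z
      simp only [Set.mem_diff, Set.mem_singleton_iff]
      constructor
      · rintro ⟨h1, _⟩; exact h1
      · intro h1; exact ⟨h1, fun e => hua (e ▸ h1)⟩
    by_cases hva : v = a₀
    · subst hva
      exact Or.inr (Or.inr (Or.inl (isLeafAxil_iff.mpr (hleafN w hw (Ne.symm hvw) hwu))))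
    · by_cases hwa : w = a₀
      · subst hwa
        exact Or.inr (Or.inl (isLeafAxil_iff.mpr (hleafN v hv hva hvu)))
      · exact Or.inr (Or.inr (Or.inr (twin_of_common hvw
          (hleafN v hv hva hvu) (hleafN w hw hwa hwu) ⟨a₀, rfl⟩)))

/-- Independent twin class under vertex deletion. -/
lemma del_indep {H : FGraph V} {B : Set V} {S : Set V} (u : V) (hB : B ⊆ ↑H.verts)
    (hcom : ∀ x ∈ B, nbhd H x = S) :
    (∀ v ∈ B, v ≠ u → ∀ w ∈ B, w ≠ u → v ≠ w → (H.delete u).FoliageEq v w) ∨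
    (∀ v ∈ B, v ≠ u → (H.delete u).Isolated v) := by
  have hN : ∀ x ∈ B, x ≠ u → nbhd (H.delete u) x = S \ {u} := by
    intro x hx hxu
    rw [delete_nbhd hxu, hcom x hx]
  by_cases hSu : (S \ {u}).Nonempty
  · left
    intro v hv hvu w hw hwu hvw
    exact Or.inr (Or.inr (Or.inr (twin_of_common hvw (hN v hv hvu) (hN w hw hwu) hSu)))
  · right
    intro v hv hvu
    refine ⟨Finset.mem_erase.mpr ⟨hvu, hB hv⟩, fun z hz => ?_⟩
    have : z ∈ nbhd (H.delete u) v := hz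
    rw [hN v hv hvu] at this
    exact hSu ⟨z, this⟩

/-- Clique twin class under vertex deletion. -/
lemma del_clique {H : FGraph V} {B : Set V} {T : Set V} (u : V)
    (hTB : ∀ x ∈ B, x ∉ T) (hcl : ∀ x ∈ B, nbhd H x = T ∪ (B \ {x})) :
    ∀ v ∈ B, v ≠ u → ∀ w ∈ B, w ≠ u → v ≠ w → (H.delete u).FoliageEq v w := by
  intro v hv hvu w hw hwu hvw
  have hNv : nbhd (H.delete u) v = (T ∪ (B \ {v})) \ {u} := by
    rw [delete_nbhd hvu, hcl v hv]
  have hNw : nbhd (H.delete u) w = (T ∪ (B \ {w})) \ {u} := by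
    rw [delete_nbhd hwu, hcl w hw]
  have hadj : (H.delete u).Adj v w := by
    show w ∈ nbhd (H.delete u) v
    rw [hNv]
    exact ⟨Or.inr ⟨hw, fun e => hvw e.symm⟩, hwu⟩
  apply foliage_of_adj_eq hadj
  rw [hNv, hNw]
  have hvT := hTB v hv
  have hwT := hTB w hw
  ext z
  by_cases hzv : z = v <;> by_cases hzw : z = w <;>
    simp only [Set.mem_union, Set.mem_diff, Set.mem_singleton_iff] <;>
    subst_vars <;> tauto

/-- Isolated vertices remain isolated (if they survive). -/
lemma isolated_step {H H' : FGraph V} (hstep : FGraph.Step H H') {v : V}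
    (hv : H.Isolated v) (hv' : v ∈ H'.verts) : H'.Isolated v := by
  rcases hstep with ⟨p, rfl⟩ | ⟨u, rfl⟩
  · refine ⟨hv', fun z hz => ?_⟩
    rcases hz with ⟨h1, _⟩ | ⟨⟨_, hpx, _⟩, _⟩
    · exact hv.2 z h1
    · exact hv.2 p (H.symm _ _ hpx)
  · exact ⟨hv', fun z hz => hv.2 z hz.1⟩

lemma verts_step_subset {H H' : FGraph V} (hstep : FGraph.Step H H') :
    (↑H'.verts : Set V) ⊆ ↑H.verts := by
  rcases hstep with ⟨p, rfl⟩ | ⟨u, rfl⟩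
  · exact fun x hx => hx
  · intro x hx
    simp only [FGraph.delete, Finset.coe_erase, Set.mem_diff] at hx
    exact hx.1

/-- One step preserves the dichotomy for a pairwise foliage-equivalent set. -/
lemma step_pres {H H' : FGraph V} (hstep : FGraph.Step H H')
    {B : Set V} (hB : B ⊆ ↑H.verts)
    (hfol : ∀ v ∈ B, ∀ w ∈ B, H.FoliageEq v w) :
    (∀ v ∈ B ∩ ↑H'.verts, ∀ w ∈ B ∩ ↑H'.verts, H'.FoliageEq v w) ∨
    (∀ v ∈ B ∩ ↑H'.verts, H'.Isolated v) := by
  by_cases hex : ∃ x ∈ B, ∃ y ∈ B, x ≠ y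
  · rcases classify (fun v hv w hw _ => hfol v hv w hw) hex with
      ⟨a₀, _, hstar⟩ | ⟨S, hSne, hcom⟩ | ⟨T, hTB, hcl⟩
    · rcases hstep with ⟨p, rfl⟩ | ⟨u, rfl⟩
      · left
        intro v hv w hw
        by_cases hvw : v = w
        · exact Or.inl hvw
        · exact lc_star p hstar v hv.1 w hw.1 hvw
      · have hmem : ∀ x, x ∈ B ∩ ↑(H.delete u).verts → x ∈ B ∧ x ≠ u := by
          intro x hx
          have := hx.2
          simp only [FGraph.delete, Finset.coe_erase, Set.mem_diff,
            Set.mem_singleton_iff] at this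
          exact ⟨hx.1, this.2⟩
        rcases del_star u hB hstar with h | h
        · left
          intro v hv w hw
          by_cases hvw : v = w
          · exact Or.inl hvw
          · obtain ⟨hv1, hv2⟩ := hmem v hv
            obtain ⟨hw1, hw2⟩ := hmem w hw
            exact h v hv1 hv2 w hw1 hw2 hvw
        · right
          intro v hv
          obtain ⟨hv1, hv2⟩ := hmem v hv
          exact h v hv1 hv2
    · rcases hstep with ⟨p, rfl⟩ | ⟨u, rfl⟩
      · left
        intro v hv w hw
        by_cases hvw : v = w
        · exact Or.inl hvw
        · exact lc_indep p hSne hcom v hv.1 w hw.1 hvw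
      · have hmem : ∀ x, x ∈ B ∩ ↑(H.delete u).verts → x ∈ B ∧ x ≠ u := by
          intro x hx
          have := hx.2
          simp only [FGraph.delete, Finset.coe_erase, Set.mem_diff,
            Set.mem_singleton_iff] at this
          exact ⟨hx.1, this.2⟩
        rcases del_indep u hB hcom with h | h
        · left
          intro v hv w hw
          by_cases hvw : v = w
          · exact Or.inl hvw
          · obtain ⟨hv1, hv2⟩ := hmem v hv
            obtain ⟨hw1, hw2⟩ := hmem w hw
            exact h v hv1 hv2 w hw1 hw2 hvw
        · right
          intro v hv
          obtain ⟨hv1, hv2⟩ := hmem v hv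
          exact h v hv1 hv2
    · rcases hstep with ⟨p, rfl⟩ | ⟨u, rfl⟩
      · left
        intro v hv w hw
        by_cases hvw : v = w
        · exact Or.inl hvw
        · exact lc_clique p hTB hcl v hv.1 w hw.1 hvw
      · left
        have hmem : ∀ x, x ∈ B ∩ ↑(H.delete u).verts → x ∈ B ∧ x ≠ u := by
          intro x hx
          have := hx.2
          simp only [FGraph.delete, Finset.coe_erase, Set.mem_diff,
            Set.mem_singleton_iff] at this
          exact ⟨hx.1, this.2⟩
        intro v hv w hw
        by_cases hvw : v = w
        · exact Or.inl hvw
        · obtain ⟨hv1, hv2⟩ := hmem v hv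
          obtain ⟨hw1, hw2⟩ := hmem w hw
          exact del_clique u hTB hcl v hv1 hv2 w hw1 hw2 hvw
  · push_neg at hex
    left
    intro v hv w hw
    exact Or.inl (hex v hv.1 w hw.1)

end DeleteCases
/-- surviving vertices of a pairwise foliage-equivalent set are pairwise
foliage-equivalent, all isolated, or none survive. -/
theorem foliageEq_set_vertexMinor {V : Type*} [DecidableEq V] (G G' : FGraph V)
    (h : IsVertexMinor G' G) (A : Set V) (hA : A ⊆ ↑G.verts)
    (hfol : ∀ v ∈ A, ∀ w ∈ A, G.FoliageEq v w) :
    (∀ v ∈ A ∩ ↑G'.verts, ∀ w ∈ A ∩ ↑G'.verts, G'.FoliageEq v w) ∨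
    (∀ v ∈ A ∩ ↑G'.verts, G'.Isolated v) ∨
    A ∩ ↑G'.verts = ∅ := by
  have key : ∀ (c : FGraph V), Relation.ReflTransGen FGraph.Step G c →
      (∀ v ∈ A ∩ ↑c.verts, ∀ w ∈ A ∩ ↑c.verts, c.FoliageEq v w) ∨
      (∀ v ∈ A ∩ ↑c.verts, c.Isolated v) ∨
      A ∩ ↑c.verts = ∅ := by
    intro c hc
    induction hc with
    | refl =>
      left
      intro v hv w hw
      exact hfol v hv.1 w hw.1
    | @tail b c hGb hbc ih =>
      have hsub : (↑c.verts : Set V) ⊆ ↑b.verts := verts_step_subset hbc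
      have hAc : A ∩ ↑c.verts = (A ∩ ↑b.verts) ∩ ↑c.verts := by
        ext x
        exact ⟨fun ⟨h1, h2⟩ => ⟨⟨h1, hsub h2⟩, h2⟩, fun ⟨⟨h1, _⟩, h2⟩ => ⟨h1, h2⟩⟩
      rcases ih with hpair | hiso | hemp
      · rcases step_pres hbc Set.inter_subset_right hpair with h | h
        · left
          intro v hv w hw
          rw [hAc] at hv hw
          exact h v hv w hw
        · right; left
          intro v hv
          rw [hAc] at hv
          exact h v hv
      · right; left
        intro v hv
        have hvb : v ∈ A ∩ ↑b.verts := ⟨hv.1, hsub hv.2⟩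
        exact isolated_step hbc (hiso v hvb) hv.2
      · right; right
        apply Set.eq_empty_of_subset_empty
        intro x hx
        rw [← hemp]
        exact ⟨hx.1, hsub hx.2⟩
  exact key G' h
end

section
/- Let n ≥ 4 and let L_n be the line graph on vertices {1, ..., n}. Let a_1 < b_1 < b_2 < a_2 be vertices of L_n. Then the graph on vertex set {a_1, a_2, b_1, b_2} whose only edges are {a_1, a_2} and {b_1, b_2} (two Bell pairs) is not a vertex-minor of L_n. -/
variable {V : Type*}

/-- The line graph `L_n` on vertices `{1, ..., n}` with edges `{i, i+1}`. -/
def lineGraph (n : ℕ) : FGraph ℕ where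
  verts := Finset.Icc 1 n
  Adj x y := x ∈ Finset.Icc 1 n ∧ y ∈ Finset.Icc 1 n ∧ (y = x + 1 ∨ x = y + 1)
  symm := by rintro x y ⟨hx, hy, hc⟩; exact ⟨hy, hx, hc.symm⟩
  loopless := by rintro x ⟨_, _, h | h⟩ <;> omega
  mem_of_adj := by rintro x y ⟨hx, hy, _⟩; exact ⟨hx, hy⟩

/-- The ring (cycle) graph `R_n` on vertices `{1, ..., n}`. -/
def ringGraph (n : ℕ) : FGraph ℕ where
  verts := Finset.Icc 1 n
  Adj x y := x ≠ y ∧ x ∈ Finset.Icc 1 n ∧ y ∈ Finset.Icc 1 n ∧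
    (y = x + 1 ∨ x = y + 1 ∨ (x = n ∧ y = 1) ∨ (x = 1 ∧ y = n))
  symm := by rintro x y ⟨hne, hx, hy, hc⟩; exact ⟨hne.symm, hy, hx, by tauto⟩
  loopless := by rintro x ⟨hne, _⟩; exact hne rfl
  mem_of_adj := by rintro x y ⟨_, hx, hy, _⟩; exact ⟨hx, hy⟩

/-- The successor of position `i` along the cycle `1, 2, ..., n, 1`. -/
def cnext (n i : ℕ) : ℕ := if i = n then 1 else i + 1

/-- A Bell pair on `{a1, a2}` together with the isolated vertex `b`. -/
def bell1 {V : Type*} [DecidableEq V] (a1 a2 b : V) : FGraph V where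
  verts := {a1, a2, b}
  Adj x y := x ≠ y ∧ ((x = a1 ∧ y = a2) ∨ (x = a2 ∧ y = a1))
  symm := by rintro x y ⟨hne, hc⟩; exact ⟨hne.symm, by tauto⟩
  loopless := by rintro x ⟨hne, _⟩; exact hne rfl
  mem_of_adj := by
    rintro x y ⟨_, (⟨hx, hy⟩ | ⟨hx, hy⟩)⟩ <;> subst hx <;> subst hy <;>
      simp [Finset.mem_insert]

/-- Two Bell pairs, on `{a1, a2}` and on `{b1, b2}`. -/
def bell2 {V : Type*} [DecidableEq V] (a1 a2 b1 b2 : V) : FGraph V where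
  verts := {a1, a2, b1, b2}
  Adj x y := x ≠ y ∧ ((x = a1 ∧ y = a2) ∨ (x = a2 ∧ y = a1) ∨
                      (x = b1 ∧ y = b2) ∨ (x = b2 ∧ y = b1))
  symm := by rintro x y ⟨hne, hc⟩; exact ⟨hne.symm, by tauto⟩
  loopless := by rintro x ⟨hne, _⟩; exact hne rfl
  mem_of_adj := by
    rintro x y ⟨_, (⟨hx, hy⟩ | ⟨hx, hy⟩ | ⟨hx, hy⟩ | ⟨hx, hy⟩)⟩ <;> subst hx <;> subst hy <;>
      simp [Finset.mem_insert]

/-- Cut-rank ≤ 1 across the threshold `t`: the cross edges between `{x ≤ t}` and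
`{y > t}` form a complete bipartite pattern `S × T`. -/
def Rank1 (t : ℕ) (G : FGraph ℕ) : Prop :=
  ∃ S T : ℕ → Prop, ∀ x y, x ≤ t → t < y → (G.Adj x y ↔ S x ∧ T y)

lemma rank1_lc (t a : ℕ) (G : FGraph ℕ) (h : Rank1 t G) : Rank1 t (G.lc a) := by
  obtain ⟨S, T, h⟩ := h
  by_cases ha : a ≤ t
  · by_cases hSa : S a
    · refine ⟨fun x => Xor' (S x) (G.Adj a x), T, fun x y hx hy => ?_⟩
      have hay : G.Adj a y ↔ T y := by rw [h a y ha hy]; tauto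
      have hxy : G.Adj x y ↔ S x ∧ T y := h x y hx hy
      have hne : x ≠ y := by omega
      simp only [FGraph.lc, Xor', xor_def]
      tauto
    · refine ⟨S, T, fun x y hx hy => ?_⟩
      have hay : ¬ G.Adj a y := by rw [h a y ha hy]; tauto
      have hxy : G.Adj x y ↔ S x ∧ T y := h x y hx hy
      simp only [FGraph.lc]
      tauto
  · push_neg at ha
    by_cases hTa : T a
    · refine ⟨S, fun y => Xor' (T y) (G.Adj a y), fun x y hx hy => ?_⟩
      have hax : G.Adj a x ↔ S x := by
        constructor
        · intro hh; exact ((h x a hx ha).1 (G.symm _ _ hh)).1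
        · intro hh; exact G.symm _ _ ((h x a hx ha).2 ⟨hh, hTa⟩)
      have hxy : G.Adj x y ↔ S x ∧ T y := h x y hx hy
      have hne : x ≠ y := by omega
      simp only [FGraph.lc, Xor', xor_def]
      tauto
    · refine ⟨S, T, fun x y hx hy => ?_⟩
      have hax : ¬ G.Adj a x := by
        intro hh; exact hTa ((h x a hx ha).1 (G.symm _ _ hh)).2
      have hxy : G.Adj x y ↔ S x ∧ T y := h x y hx hy
      simp only [FGraph.lc]
      tauto

lemma rank1_delete (t v : ℕ) (G : FGraph ℕ) (h : Rank1 t G) : Rank1 t (G.delete v) := by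
  obtain ⟨S, T, h⟩ := h
  refine ⟨fun x => S x ∧ x ≠ v, fun y => T y ∧ y ≠ v, fun x y hx hy => ?_⟩
  have hxy := h x y hx hy
  simp only [FGraph.delete]
  tauto

lemma rank1_step (t : ℕ) (G G' : FGraph ℕ) (hs : FGraph.Step G G') (h : Rank1 t G) :
    Rank1 t G' := by
  rcases hs with ⟨a, rfl⟩ | ⟨v, rfl⟩
  · exact rank1_lc t a G h
  · exact rank1_delete t v G h

lemma rank1_of_vertexMinor (t : ℕ) (H G : FGraph ℕ) (hm : IsVertexMinor H G)
    (h : Rank1 t G) : Rank1 t H := by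
  induction hm with
  | refl => exact h
  | tail _ hs ih => exact rank1_step t _ _ hs ih

lemma rank1_lineGraph (t n : ℕ) : Rank1 t (lineGraph n) := by
  refine ⟨fun x => x = t ∧ 1 ≤ t ∧ t + 1 ≤ n, fun y => y = t + 1, fun x y hx hy => ?_⟩
  simp only [lineGraph, Finset.mem_Icc]
  omega

/-- two Bell pairs `{a1, a2}` and `{b1, b2}` with `a1 < b1 < b2 < a2`
cannot be extracted from the line graph `L_n`. -/
theorem bell2_not_vertexMinor_line_nested (n a1 b1 b2 a2 : ℕ) (hn : 4 ≤ n)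
    (h0 : 1 ≤ a1) (h1 : a1 < b1) (h2 : b1 < b2) (h3 : b2 < a2) (h4 : a2 ≤ n) :
    ¬ IsVertexMinor (bell2 a1 a2 b1 b2) (lineGraph n) := by
  intro hm
  obtain ⟨S, T, h⟩ := rank1_of_vertexMinor b1 _ _ hm (rank1_lineGraph b1 n)
  have hA : (bell2 a1 a2 b1 b2).Adj a1 a2 := ⟨by omega, by tauto⟩
  have hB : (bell2 a1 a2 b1 b2).Adj b1 b2 := ⟨by omega, by tauto⟩
  have h1' := (h a1 a2 (by omega) (by omega)).1 hA
  have h2' := (h b1 b2 (by omega) (by omega)).1 hB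
  have hC : (bell2 a1 a2 b1 b2).Adj a1 b2 :=
    (h a1 b2 (by omega) (by omega)).2 ⟨h1'.1, h2'.2⟩
  obtain ⟨-, hc⟩ := hC
  rcases hc with ⟨e1,e2⟩|⟨e1,e2⟩|⟨e1,e2⟩|⟨e1,e2⟩ <;> omega
end

section
/- Let n ≥ 4 and let L_n be the line graph on vertices {1, ..., n}. Let a_1 < a_2 < b_1 < b_2 be vertices of L_n with a_2 and b_1 adjacent in L_n (i.e., b_1 = a_2 + 1). Then the graph on vertex set {a_1, a_2, b_1, b_2} whose only edges are {a_1, a_2} and {b_1, b_2} (two Bell pairs) is not a vertex-minor of L_n. -/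
variable {V : Type*}

namespace VMProof

/-- Cross edges from the `P` side to the `Q` side. -/
def Cr (G : FGraph ℕ) (P Q : ℕ → Prop) (x y : ℕ) : Prop := G.Adj x y ∧ P x ∧ Q y

/-- `x` is an endpoint on the `P` side of some cross edge. -/
def InT (G : FGraph ℕ) (P Q : ℕ → Prop) (x : ℕ) : Prop := ∃ y, Cr G P Q x y

/-- There exists a cross edge. -/
def CrEx (G : FGraph ℕ) (P Q : ℕ → Prop) : Prop := ∃ x y, Cr G P Q x y

/-- Cross edges form a complete bipartite graph. -/
def C1 (G : FGraph ℕ) (P Q : ℕ → Prop) : Prop :=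
  ∀ ⦃x y x' y'⦄, Cr G P Q x y → Cr G P Q x' y' → G.Adj x y'

/-- The boundary vertex `p` is crossing, or its neighbourhood is exactly `T`. -/
def C2 (G : FGraph ℕ) (P Q : ℕ → Prop) (p : ℕ) : Prop :=
  CrEx G P Q → p ∈ G.verts → (InT G P Q p ∨ ∀ z, G.Adj p z ↔ InT G P Q z)

/-- If there is no cross edge, one of the two boundary vertices is isolated. -/
def C4 (G : FGraph ℕ) (P Q : ℕ → Prop) (p q : ℕ) : Prop :=
  ¬ CrEx G P Q → p ∈ G.verts → q ∈ G.verts →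
    (∀ z, ¬ G.Adj p z) ∨ (∀ z, ¬ G.Adj q z)

/-- If `p` crosses and has a crossing neighbour on its own side, then its
neighbourhood within its side is exactly `T \ {p}`. -/
def C5 (G : FGraph ℕ) (P Q : ℕ → Prop) (p : ℕ) : Prop :=
  InT G P Q p → (∃ w, G.Adj p w ∧ InT G P Q w) →
    ∀ z, P z → (G.Adj p z ↔ (InT G P Q z ∧ z ≠ p))

/-- The inductive invariant: the cut conditions at every threshold. -/
def Inv (G : FGraph ℕ) : Prop := ∀ t : ℕ,
  C1 G (· ≤ t) (t < ·) ∧ C2 G (· ≤ t) (t < ·) t ∧ C2 G (t < ·) (· ≤ t) (t+1) ∧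
  C4 G (· ≤ t) (t < ·) t (t+1) ∧ C5 G (· ≤ t) (t < ·) t ∧ C5 G (t < ·) (· ≤ t) (t+1)

variable {G : FGraph ℕ} {P Q : ℕ → Prop} {p q a v : ℕ}

lemma cr_swap (hx : Cr G P Q x y) : Cr G Q P y x :=
  ⟨G.symm _ _ hx.1, hx.2.2, hx.2.1⟩

lemma crEx_swap (h : CrEx G P Q) : CrEx G Q P := by
  obtain ⟨x, y, hxy⟩ := h; exact ⟨y, x, cr_swap hxy⟩

lemma c1_swap (h : C1 G P Q) : C1 G Q P := by
  intro x y x' y' hxy hx'y'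
  exact G.symm _ _ (h (cr_swap hx'y') (cr_swap hxy))

lemma c4_swap (h : C4 G P Q p q) : C4 G Q P q p := by
  intro hncr hq hp
  exact (h (fun hc => hncr (crEx_swap hc)) hp hq).symm

lemma cr_mem_left (h : Cr G P Q x y) : x ∈ G.verts := (G.mem_of_adj _ _ h.1).1

/- ### Deletion preservation -/

lemma del_adj : (G.delete v).Adj x y ↔ G.Adj x y ∧ x ≠ v ∧ y ≠ v := Iff.rfl

lemma del_cr : Cr (G.delete v) P Q x y ↔ Cr G P Q x y ∧ x ≠ v ∧ y ≠ v := by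
  unfold Cr; rw [del_adj]; tauto

lemma del_inT (h1 : C1 G P Q) (h0 : Cr (G.delete v) P Q x0 y0) (z : ℕ) :
    InT (G.delete v) P Q z ↔ (InT G P Q z ∧ z ≠ v) := by
  rw [del_cr] at h0
  constructor
  · rintro ⟨y, hy⟩
    rw [del_cr] at hy
    exact ⟨⟨y, hy.1⟩, hy.2.1⟩
  · rintro ⟨⟨y1, hy1⟩, hzv⟩
    exact ⟨y0, del_cr.2 ⟨⟨h1 hy1 h0.1, hy1.2.1, h0.1.2.2⟩, hzv, h0.2.2⟩⟩

lemma del_C1 (h1 : C1 G P Q) : C1 (G.delete v) P Q := by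
  intro x y x' y' hxy hx'y'
  rw [del_cr] at hxy hx'y'
  exact del_adj.2 ⟨h1 hxy.1 hx'y'.1, hxy.2.1, hx'y'.2.2⟩

lemma del_C2 (h1 : C1 G P Q) (h2 : C2 G P Q p) : C2 (G.delete v) P Q p := by
  rintro ⟨x0, y0, h0⟩ hp
  have hpv : p ≠ v ∧ p ∈ G.verts := Finset.mem_erase.1 hp
  have h0' := (del_cr.1 h0)
  rcases h2 ⟨x0, y0, h0'.1⟩ hpv.2 with hT | hN
  · -- p ∈ T, hence p ∈ T'
    left
    obtain ⟨y1, hy1⟩ := hT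
    exact ⟨y0, del_cr.2 ⟨⟨h1 hy1 h0'.1, hy1.2.1, h0'.1.2.2⟩, hpv.1, h0'.2.2⟩⟩
  · right
    intro z
    rw [del_inT h1 h0, del_adj]
    constructor
    · rintro ⟨hadj, _, hzv⟩
      exact ⟨(hN z).1 hadj, hzv⟩
    · rintro ⟨hz, hzv⟩
      exact ⟨(hN z).2 hz, hpv.1, hzv⟩

lemma del_C4 (hdisj : ∀ x, ¬ (P x ∧ Q x))
    (h1 : C1 G P Q) (h2 : C2 G P Q p) (h3 : C2 G Q P q) (h4 : C4 G P Q p q) :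
    C4 (G.delete v) P Q p q := by
  intro hncr hp hq
  have hpv := Finset.mem_erase.1 hp
  have hqv := Finset.mem_erase.1 hq
  by_cases hcr : CrEx G P Q
  · -- all cross edges of G contain v
    obtain ⟨x1, y1, hx1⟩ := hcr
    have hall : ∀ x y, Cr G P Q x y → x = v ∨ y = v := by
      intro x y hxy
      by_contra hc
      push_neg at hc
      exact hncr ⟨x, y, del_cr.2 ⟨hxy, hc.1, hc.2⟩⟩
    rcases hall _ _ hx1 with rfl | rfl
    · -- T ⊆ {x1}
      have hTv : ∀ z, InT G P Q z → z = x1 := by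
        rintro z ⟨y2, hy2⟩
        rcases hall _ _ hy2 with rfl | rfl
        · rfl
        · exact absurd (hall _ _ ⟨h1 hy2 hx1, hy2.2.1, hx1.2.2⟩)
            (by rintro (rfl | rfl)
                · exact hdisj _ ⟨hy2.2.1, hy2.2.2⟩
                · exact hdisj _ ⟨hx1.2.1, hx1.2.2⟩)
      rcases h2 ⟨x1, y1, hx1⟩ hpv.2 with hT | hN
      · exact absurd (hTv p hT) hpv.1
      · left
        intro z hz
        rw [del_adj] at hz
        exact hz.2.2 (hTv z ((hN z).1 hz.1))
    · -- S ⊆ {y1}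
      have hSv : ∀ z, InT G Q P z → z = y1 := by
        rintro z ⟨y2, hy2⟩
        have hy2' := cr_swap hy2
        rcases hall _ _ hy2' with rfl | rfl
        · exact absurd (hall _ _ ⟨h1 hx1 hy2', hx1.2.1, hy2'.2.2⟩)
            (by rintro (rfl | rfl)
                · exact hdisj _ ⟨hx1.2.1, hx1.2.2⟩
                · exact hdisj _ ⟨hy2'.2.1, hy2'.2.2⟩)
        · rfl
      rcases h3 (crEx_swap ⟨x1, y1, hx1⟩) hqv.2 with hT | hN
      · exact absurd (hSv q hT) hqv.1
      · right
        intro z hz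
        rw [del_adj] at hz
        exact hz.2.2 (hSv z ((hN z).1 hz.1))
  · rcases h4 hcr hpv.2 hqv.2 with hNp | hNq
    · left; intro z hz; exact hNp z (del_adj.1 hz).1
    · right; intro z hz; exact hNq z (del_adj.1 hz).1

lemma del_C5 (h1 : C1 G P Q) (h5 : C5 G P Q p) : C5 (G.delete v) P Q p := by
  intro hTp hw z hz
  obtain ⟨yp, hyp⟩ := hTp
  have hc := h5 ((del_inT h1 hyp p).1 ⟨yp, hyp⟩).1
    (by obtain ⟨w, hw1, hw2⟩ := hw
        exact ⟨w, (del_adj.1 hw1).1, ((del_inT h1 hyp w).1 hw2).1⟩)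
  rw [del_inT h1 hyp, del_adj]
  constructor
  · rintro ⟨hadj, hpv, hzv⟩
    exact ⟨⟨((hc z hz).1 hadj).1, hzv⟩, ((hc z hz).1 hadj).2⟩
  · rintro ⟨⟨hzT, hzv⟩, hzp⟩
    have hpv : p ≠ v := (del_cr.1 hyp).2.1
    exact ⟨(hc z hz).2 ⟨hzT, hzp⟩, hpv, hzv⟩

end VMProof

namespace VMProof

variable {G : FGraph ℕ} {P Q : ℕ → Prop} {p q a v x y : ℕ}

lemma pq_ne (hdisj : ∀ x, ¬ (P x ∧ Q x)) (hx : P x) (hy : Q y) : x ≠ y :=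
  fun h => hdisj x ⟨hx, h ▸ hy⟩

lemma lc_adj (hne : x ≠ y) :
    (G.lc a).Adj x y ↔ ((G.Adj x y ∧ ¬(G.Adj a x ∧ G.Adj a y)) ∨
      (¬ G.Adj x y ∧ G.Adj a x ∧ G.Adj a y)) := by
  show ((G.Adj x y ∧ ¬(x ≠ y ∧ G.Adj a x ∧ G.Adj a y)) ∨
      ((x ≠ y ∧ G.Adj a x ∧ G.Adj a y) ∧ ¬ G.Adj x y)) ↔ _
  tauto

lemma lc_ne (h : (G.lc a).Adj x y) : x ≠ y := by
  rintro rfl; exact (G.lc a).loopless _ h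

/- ### characterizations when `a` is on the `P` side with no cross neighbours -/

lemma lc_noQ_adj (hnoQ : ∀ y, Q y → ¬ G.Adj a y) (hdisj : ∀ x, ¬ (P x ∧ Q x))
    (hx : P x) (hy : Q y) : ((G.lc a).Adj x y ↔ G.Adj x y) := by
  have hay := hnoQ y hy
  rw [lc_adj (pq_ne hdisj hx hy)]; tauto

lemma lc_noQ_inT (hnoQ : ∀ y, Q y → ¬ G.Adj a y) (hdisj : ∀ x, ¬ (P x ∧ Q x)) (z : ℕ) :
    InT (G.lc a) P Q z ↔ InT G P Q z := by
  constructor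
  · rintro ⟨y, hy⟩
    exact ⟨y, (lc_noQ_adj hnoQ hdisj hy.2.1 hy.2.2).1 hy.1, hy.2⟩
  · rintro ⟨y, hy⟩
    exact ⟨y, (lc_noQ_adj hnoQ hdisj hy.2.1 hy.2.2).2 hy.1, hy.2⟩

/- ### characterizations when `a` is on the `P` side and crossing -/

lemma lc_T_Sadj (hPa : P a) (h1 : C1 G P Q) (haT : InT G P Q a) (hy : Q y) :
    G.Adj a y ↔ ∃ x, Cr G P Q x y := by
  constructor
  · intro h; exact ⟨a, h, hPa, hy⟩
  · rintro ⟨x1, hx1⟩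
    obtain ⟨ya, hya⟩ := haT
    exact h1 hya hx1

lemma lc_T_Tadj (h1 : C1 G P Q) (hS : ∃ x', Cr G P Q x' y) (hx : P x) :
    G.Adj x y ↔ InT G P Q x := by
  obtain ⟨x1, hx1⟩ := hS
  constructor
  · intro h; exact ⟨y, h, hx, hx1.2.2⟩
  · rintro ⟨y1, hy1⟩; exact h1 hy1 hx1

lemma lc_T_adj (hdisj : ∀ x, ¬ (P x ∧ Q x)) (hPa : P a) (h1 : C1 G P Q)
    (haT : InT G P Q a) (hx : P x) (hy : Q y) :
    (G.lc a).Adj x y ↔ (¬(InT G P Q x ↔ G.Adj a x) ∧ ∃ x', Cr G P Q x' y) := by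
  rw [lc_adj (pq_ne hdisj hx hy)]
  by_cases hSy : ∃ x', Cr G P Q x' y
  · have hay : G.Adj a y := (lc_T_Sadj hPa h1 haT hy).2 hSy
    have hxy := lc_T_Tadj h1 hSy hx
    tauto
  · have hay : ¬ G.Adj a y := fun h => hSy ((lc_T_Sadj hPa h1 haT hy).1 h)
    have hxy : ¬ G.Adj x y := fun h => hSy ⟨x, h, hx, hy⟩
    tauto

lemma lc_T_inT (hdisj : ∀ x, ¬ (P x ∧ Q x)) (hPa : P a) (h1 : C1 G P Q)
    (haT : InT G P Q a) (z : ℕ) :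
    InT (G.lc a) P Q z ↔ (P z ∧ ¬(InT G P Q z ↔ G.Adj a z)) := by
  constructor
  · rintro ⟨y, hy⟩
    exact ⟨hy.2.1, ((lc_T_adj hdisj hPa h1 haT hy.2.1 hy.2.2).1 hy.1).1⟩
  · rintro ⟨hz, hne⟩
    obtain ⟨ya, hya⟩ := haT
    exact ⟨ya, (lc_T_adj hdisj hPa h1 ⟨ya, hya⟩ hz hya.2.2).2 ⟨hne, ⟨a, hya⟩⟩, hz, hya.2.2⟩

/- ### C1, near side -/

lemma lc_C1_near (hdisj : ∀ x, ¬ (P x ∧ Q x)) (hPa : P a) (h1 : C1 G P Q) :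
    C1 (G.lc a) P Q := by
  intro x y x' y' hxy hx'y'
  by_cases haT : InT G P Q a
  · have hc := (lc_T_adj hdisj hPa h1 haT hxy.2.1 hxy.2.2).1 hxy.1
    have hc' := (lc_T_adj hdisj hPa h1 haT hx'y'.2.1 hx'y'.2.2).1 hx'y'.1
    exact (lc_T_adj hdisj hPa h1 haT hxy.2.1 hx'y'.2.2).2 ⟨hc.1, hc'.2⟩
  · have hnoQ : ∀ y, Q y → ¬ G.Adj a y := fun y hy h => haT ⟨y, h, hPa, hy⟩
    have hadj := (lc_noQ_adj hnoQ hdisj hxy.2.1 hxy.2.2).1 hxy.1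
    have hadj' := (lc_noQ_adj hnoQ hdisj hx'y'.2.1 hx'y'.2.2).1 hx'y'.1
    exact (lc_noQ_adj hnoQ hdisj hxy.2.1 hx'y'.2.2).2
      (h1 ⟨hadj, hxy.2⟩ ⟨hadj', hx'y'.2⟩)

/- ### C4, near side -/

lemma lc_C4_near (hdisj : ∀ x, ¬ (P x ∧ Q x)) (hPa : P a) (hQq : Q q)
    (h1 : C1 G P Q) (h4 : C4 G P Q p q) : C4 (G.lc a) P Q p q := by
  intro hncr' hp hq
  by_cases haT : InT G P Q a
  · exfalso
    obtain ⟨y, hy⟩ := (lc_T_inT hdisj hPa h1 haT a).2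
      ⟨hPa, by simp [haT, G.loopless a]⟩
    exact hncr' ⟨a, y, hy⟩
  · have hnoQ : ∀ y, Q y → ¬ G.Adj a y := fun y hy h => haT ⟨y, h, hPa, hy⟩
    by_cases hcr : CrEx G P Q
    · exfalso
      obtain ⟨x0, y0, h0⟩ := hcr
      exact hncr' ⟨x0, y0, (lc_noQ_adj hnoQ hdisj h0.2.1 h0.2.2).2 h0.1, h0.2⟩
    · rcases h4 hcr hp hq with hNp | hNq
      · left
        intro z hz
        have hne := lc_ne hz
        rw [lc_adj hne] at hz
        have hap : ¬ G.Adj a p := fun h => hNp a (G.symm _ _ h)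
        have := hNp z
        tauto
      · right
        intro z hz
        have hne := lc_ne hz
        rw [lc_adj hne] at hz
        have haq : ¬ G.Adj a q := hnoQ q hQq
        have := hNq z
        tauto

end VMProof

namespace VMProof

variable {G : FGraph ℕ} {P Q : ℕ → Prop} {p q a v x y : ℕ}

/- ### C2, near side -/

lemma lc_C2_near (hdisj : ∀ x, ¬ (P x ∧ Q x)) (hPa : P a) (htot : ∀ x, P x ∨ Q x)
    (hPp : P p) (h1 : C1 G P Q) (h2 : C2 G P Q p) (h5 : C5 G P Q p) :
    C2 (G.lc a) P Q p := by
  rintro ⟨x0, y0, h0⟩ hp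
  have hp' : p ∈ G.verts := hp
  by_cases haT : InT G P Q a
  · have hchar := lc_T_inT hdisj hPa h1 haT
    obtain ⟨ya, hya⟩ := haT
    rcases h2 ⟨a, ya, hya⟩ hp' with hTp | hNp
    · by_cases hap : G.Adj a p
      · right
        have hap' : G.Adj p a := G.symm _ _ hap
        have hanep : a ≠ p := fun h => G.loopless a (h ▸ hap)
        have hc5 := h5 hTp ⟨a, hap', ⟨ya, hya⟩⟩
        intro z
        rcases htot z with hz | hz
        · by_cases hzp : z = p
          · subst hzp
            rw [hchar z]
            simp only [iff_false_intro ((G.lc a).loopless z), false_iff]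
            rintro ⟨_, hcon⟩
            exact hcon (iff_of_true hTp hap)
          · rw [lc_adj (Ne.symm hzp), hchar z]
            have hpz := hc5 z hz
            have : z ≠ p := hzp
            tauto
        · constructor
          · intro h
            have := (lc_T_adj hdisj hPa h1 ⟨ya, hya⟩ hPp hz).1 h
            exact absurd (iff_of_true hTp hap) this.1
          · intro h
            rw [hchar z] at h
            exact absurd ⟨h.1, hz⟩ (hdisj z)
      · left
        rw [hchar p]
        exact ⟨hPp, by tauto⟩
    · -- neighbourhood of p is exactly T; then a ∈ N(p), so p lands in the new T
      have hap : G.Adj a p := G.symm _ _ ((hNp a).2 ⟨ya, hya⟩)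
      have hTp : ¬ InT G P Q p := fun h => G.loopless p ((hNp p).2 h)
      left
      rw [hchar p]
      exact ⟨hPp, by tauto⟩
  · have hnoQ : ∀ y, Q y → ¬ G.Adj a y := fun y hy h => haT ⟨y, h, hPa, hy⟩
    have hchar := lc_noQ_inT hnoQ hdisj
    have h0' : Cr G P Q x0 y0 :=
      ⟨(lc_noQ_adj hnoQ hdisj h0.2.1 h0.2.2).1 h0.1, h0.2⟩
    rcases h2 ⟨x0, y0, h0'⟩ hp' with hTp | hNp
    · left; exact (hchar p).2 hTp
    · right
      intro z
      rw [hchar z]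
      have hap : ¬ G.Adj a p := fun h => haT ((hNp a).1 (G.symm _ _ h))
      by_cases hzp : z = p
      · subst hzp
        have hTp : ¬ InT G P Q z := fun h => G.loopless z ((hNp z).2 h)
        simp only [iff_false_intro ((G.lc a).loopless z), false_iff]
        exact hTp
      · rw [lc_adj (Ne.symm hzp)]
        have := hNp z
        tauto

/- ### C5, near side -/

lemma lc_C5_near (hdisj : ∀ x, ¬ (P x ∧ Q x)) (hPa : P a) (hPp : P p)
    (h1 : C1 G P Q) (h2 : C2 G P Q p) (h5 : C5 G P Q p)
    (hLA : ∀ x w s, P x → x ≠ p → G.Adj x p → P w → w ≠ p → Q s → G.Adj w s → G.Adj x s) :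
    C5 (G.lc a) P Q p := by
  intro hT'p hw'
  by_cases haT : InT G P Q a
  · have hchar := lc_T_inT hdisj hPa h1 haT
    have hp' := (hchar p).1 hT'p
    by_cases hTp : InT G P Q p
    · have hap : ¬ G.Adj a p := fun h => hp'.2 (iff_of_true hTp h)
      by_cases hapeq : a = p
      · -- a = p
        obtain ⟨w, hw1, hw2⟩ := hw'
        have hwp : w ≠ p := fun h => (G.lc a).loopless p (h ▸ hw1)
        have hwa : w ≠ a := fun h => hwp (h.trans hapeq)
        have hAw : G.Adj a w := by
          have hw1' : (G.lc a).Adj a w := hapeq ▸ hw1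
          rw [lc_adj (Ne.symm hwa)] at hw1'
          have haa := G.loopless a
          tauto
        have hw2' := (hchar w).1 hw2
        have hnTw : ¬ InT G P Q w := fun h => hw2'.2 (iff_of_true h hAw)
        have hwadjp : G.Adj w p := hapeq ▸ (G.symm _ _ hAw)
        have hTsub : ∀ u, InT G P Q u → u = p := by
          intro u hu
          by_contra hup
          obtain ⟨s, hs⟩ := hu
          exact hnTw ⟨s, hLA w u s hw2'.1 hwp hwadjp hs.2.1 hup hs.2.2 hs.1,
            hw2'.1, hs.2.2⟩
        intro z hz
        by_cases hzp : z = p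
        · rw [hzp]
          exact iff_of_false ((G.lc a).loopless p) (fun h => h.2 rfl)
        · rw [lc_adj (Ne.symm hzp), hchar z]
          have hnTz : ¬ InT G P Q z := fun h => hzp (hTsub z h)
          have hpz : G.Adj p z ↔ G.Adj a z := by rw [hapeq]
          tauto
      · -- a ≠ p : derive a contradiction from the extra crossing neighbour
        exfalso
        obtain ⟨w, hw1, hw2⟩ := hw'
        have hwp : w ≠ p := fun h => (G.lc a).loopless p (h ▸ hw1)
        have hw2' := (hchar w).1 hw2
        have hpw : G.Adj p w := by
          rw [lc_adj (Ne.symm hwp)] at hw1; tauto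
        by_cases hTw : InT G P Q w
        · have hc := h5 hTp ⟨w, hpw, hTw⟩
          exact hap (G.symm _ _ ((hc a hPa).2 ⟨haT, hapeq⟩))
        · have hAw : G.Adj a w := by tauto
          obtain ⟨s, hs⟩ := haT
          exact hTw ⟨s, hLA w a s hw2'.1 hwp (G.symm _ _ hpw) hPa hapeq hs.2.2 hs.1,
            hw2'.1, hs.2.2⟩
    · -- p ∈ A \ T
      have hap : G.Adj a p := by tauto
      have hpverts : p ∈ G.verts := (G.mem_of_adj _ _ hap).2
      obtain ⟨ya, hya⟩ := haT
      rcases h2 ⟨a, ya, hya⟩ hpverts with hTp' | hNp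
      · exact absurd hTp' hTp
      intro z hz
      by_cases hzp : z = p
      · subst hzp
        simp only [iff_false_intro ((G.lc a).loopless z)]
        tauto
      · rw [lc_adj (Ne.symm hzp), hchar z]
        have := hNp z
        tauto
  · -- a not crossing
    have hnoQ : ∀ y, Q y → ¬ G.Adj a y := fun y hy h => haT ⟨y, h, hPa, hy⟩
    have hchar := lc_noQ_inT hnoQ hdisj
    have hTp : InT G P Q p := (hchar p).1 hT'p
    obtain ⟨w, hw1, hw2⟩ := hw'
    have hTw := (hchar w).1 hw2
    have hwp : w ≠ p := fun h => (G.lc a).loopless p (h ▸ hw1)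
    have hPw : P w := by obtain ⟨yw, hyw⟩ := hTw; exact hyw.2.1
    by_cases hap : G.Adj a p
    · exfalso
      have hanep : a ≠ p := fun h => G.loopless a (h ▸ hap)
      rw [lc_adj (Ne.symm hwp)] at hw1
      rcases hw1 with ⟨hpw, _⟩ | ⟨_, _, hAw⟩
      · have hc := h5 hTp ⟨w, hpw, hTw⟩
        exact haT ((hc a hPa).1 (G.symm _ _ hap)).1
      · obtain ⟨s, hs⟩ := hTw
        exact haT ⟨s, hLA a w s hPa hanep hap hPw hwp hs.2.2 hs.1, hPa, hs.2.2⟩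
    · have hpw : G.Adj p w := by
        rw [lc_adj (Ne.symm hwp)] at hw1; tauto
      have hc := h5 hTp ⟨w, hpw, hTw⟩
      intro z hz
      by_cases hzp : z = p
      · subst hzp
        simp only [iff_false_intro ((G.lc a).loopless z)]
        tauto
      · rw [lc_adj (Ne.symm hzp), hchar z]
        have := hc z hz
        tauto

end VMProof

namespace VMProof

variable {G : FGraph ℕ} {P Q : ℕ → Prop} {p q a v x y : ℕ}

/- ### characterizations when `a` is on the `Q` side -/

lemma lc_noP_adj (hnoP : ∀ x, P x → ¬ G.Adj a x) (hdisj : ∀ x, ¬ (P x ∧ Q x))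
    (hx : P x) (hy : Q y) : ((G.lc a).Adj x y ↔ G.Adj x y) := by
  have hax := hnoP x hx
  rw [lc_adj (pq_ne hdisj hx hy)]; tauto

lemma lc_noP_inT (hnoP : ∀ x, P x → ¬ G.Adj a x) (hdisj : ∀ x, ¬ (P x ∧ Q x)) (z : ℕ) :
    InT (G.lc a) P Q z ↔ InT G P Q z := by
  constructor
  · rintro ⟨y, hy⟩
    exact ⟨y, (lc_noP_adj hnoP hdisj hy.2.1 hy.2.2).1 hy.1, hy.2⟩
  · rintro ⟨y, hy⟩
    exact ⟨y, (lc_noP_adj hnoP hdisj hy.2.1 hy.2.2).2 hy.1, hy.2⟩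

lemma lc_S_Tadj (hQa : Q a) (h1 : C1 G P Q) (hxa : Cr G P Q xa a) (hx : P x) :
    G.Adj a x ↔ InT G P Q x := by
  constructor
  · intro h; exact ⟨a, G.symm _ _ h, hx, hQa⟩
  · rintro ⟨y1, hy1⟩
    exact G.symm _ _ (h1 hy1 hxa)

lemma lc_S_Sadj (h1 : C1 G P Q) (hTx : InT G P Q x) (hy : Q y) :
    G.Adj x y ↔ ∃ x', Cr G P Q x' y := by
  constructor
  · intro h
    obtain ⟨y1, hy1⟩ := hTx
    exact ⟨x, h, hy1.2.1, hy⟩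
  · rintro ⟨x2, hx2⟩
    obtain ⟨y1, hy1⟩ := hTx
    exact h1 hy1 hx2

lemma lc_S_adj (hdisj : ∀ x, ¬ (P x ∧ Q x)) (hQa : Q a) (h1 : C1 G P Q)
    (hxa : Cr G P Q xa a) (hx : P x) (hy : Q y) :
    (G.lc a).Adj x y ↔ (InT G P Q x ∧ ¬((∃ x', Cr G P Q x' y) ↔ G.Adj a y)) := by
  rw [lc_adj (pq_ne hdisj hx hy)]
  by_cases hTx : InT G P Q x
  · have hax : G.Adj a x := (lc_S_Tadj hQa h1 hxa hx).2 hTx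
    have hxy := lc_S_Sadj h1 hTx hy
    tauto
  · have hax : ¬ G.Adj a x := fun h => hTx ((lc_S_Tadj hQa h1 hxa hx).1 h)
    have hxy : ¬ G.Adj x y := fun h => hTx ⟨y, h, hx, hy⟩
    tauto

lemma lc_S_inT (hdisj : ∀ x, ¬ (P x ∧ Q x)) (hQa : Q a) (h1 : C1 G P Q)
    (hxa : Cr G P Q xa a) (z : ℕ) :
    InT (G.lc a) P Q z ↔ InT G P Q z := by
  constructor
  · rintro ⟨y, hy⟩
    exact ((lc_S_adj hdisj hQa h1 hxa hy.2.1 hy.2.2).1 hy.1).1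
  · intro hz
    have hPz : P z := by obtain ⟨y1, hy1⟩ := hz; exact hy1.2.1
    refine ⟨a, (lc_S_adj hdisj hQa h1 hxa hPz hQa).2 ⟨hz, ?_⟩, hPz, hQa⟩
    have haa := G.loopless a
    have hSa : ∃ x', Cr G P Q x' a := ⟨xa, hxa⟩
    tauto

/- ### C2, far side -/

lemma lc_C2_far (hdisj : ∀ x, ¬ (P x ∧ Q x)) (hQa : Q a) (htot : ∀ x, P x ∨ Q x)
    (hPp : P p) (h1 : C1 G P Q) (h2 : C2 G P Q p) :
    C2 (G.lc a) P Q p := by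
  rintro ⟨x0, y0, h0⟩ hp
  have hp' : p ∈ G.verts := hp
  by_cases haS : ∃ x', Cr G P Q x' a
  · obtain ⟨xa, hxa⟩ := haS
    have hchar := lc_S_inT hdisj hQa h1 hxa
    rcases h2 ⟨xa, a, hxa⟩ hp' with hTp | hNp
    · left; exact (hchar p).2 hTp
    · right
      have hnTp : ¬ InT G P Q p := fun h => G.loopless p ((hNp p).2 h)
      have hap : ¬ G.Adj a p := fun h => hnTp ((lc_S_Tadj hQa h1 hxa hPp).1 h)
      intro z
      rw [hchar z]
      rcases htot z with hz | hz
      · by_cases hzp : z = p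
        · subst hzp
          exact iff_of_false ((G.lc a).loopless z) hnTp
        · rw [lc_adj (Ne.symm hzp)]
          have := hNp z
          tauto
      · constructor
        · intro h
          have := ((lc_S_adj hdisj hQa h1 hxa hPp hz).1 h).1
          exact absurd this hnTp
        · intro h
          obtain ⟨y1, hy1⟩ := h
          exact absurd ⟨hy1.2.1, hz⟩ (hdisj z)
  · have hnoP : ∀ x, P x → ¬ G.Adj a x := fun x hx h => haS ⟨x, G.symm _ _ h, hx, hQa⟩
    have hchar := lc_noP_inT hnoP hdisj
    have h0' : Cr G P Q x0 y0 :=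
      ⟨(lc_noP_adj hnoP hdisj h0.2.1 h0.2.2).1 h0.1, h0.2⟩
    rcases h2 ⟨x0, y0, h0'⟩ hp' with hTp | hNp
    · left; exact (hchar p).2 hTp
    · right
      intro z
      rw [hchar z]
      have hap : ¬ G.Adj a p := hnoP p hPp
      by_cases hzp : z = p
      · subst hzp
        exact iff_of_false ((G.lc a).loopless z) (fun h => G.loopless z ((hNp z).2 h))
      · rw [lc_adj (Ne.symm hzp)]
        have := hNp z
        tauto

/- ### C5, far side -/

lemma lc_C5_far (hdisj : ∀ x, ¬ (P x ∧ Q x)) (hQa : Q a) (hPp : P p)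
    (h1 : C1 G P Q) (h5 : C5 G P Q p)
    (hLA : ∀ x w s, P x → x ≠ p → G.Adj x p → P w → w ≠ p → Q s → G.Adj w s → G.Adj x s) :
    C5 (G.lc a) P Q p := by
  intro hT'p hw'
  by_cases haS : ∃ x', Cr G P Q x' a
  · obtain ⟨xa, hxa⟩ := haS
    have hchar := lc_S_inT hdisj hQa h1 hxa
    have hTp : InT G P Q p := (hchar p).1 hT'p
    have hAp : G.Adj a p := (lc_S_Tadj hQa h1 hxa hPp).2 hTp
    obtain ⟨w, hw1, hw2⟩ := hw'
    have hTw : InT G P Q w := (hchar w).1 hw2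
    have hPw : P w := by obtain ⟨yw, hyw⟩ := hTw; exact hyw.2.1
    have hAw : G.Adj a w := (lc_S_Tadj hQa h1 hxa hPw).2 hTw
    have hwp : w ≠ p := fun h => (G.lc a).loopless p (h ▸ hw1)
    have hnpw : ¬ G.Adj p w := by
      rw [lc_adj (Ne.symm hwp)] at hw1; tauto
    by_cases hex : ∃ w2, G.Adj p w2 ∧ InT G P Q w2
    · exact absurd ((h5 hTp hex w hPw).2 ⟨hTw, hwp⟩) hnpw
    · intro z hz
      by_cases hzp : z = p
      · subst hzp
        exact iff_of_false ((G.lc a).loopless z) (fun h => h.2 rfl)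
      · rw [hchar z]
        by_cases hTz : InT G P Q z
        · have hAz : G.Adj a z := (lc_S_Tadj hQa h1 hxa hz).2 hTz
          have hnpz : ¬ G.Adj p z := fun h => hex ⟨z, h, hTz⟩
          rw [lc_adj (Ne.symm hzp)]
          exact iff_of_true (Or.inr ⟨hnpz, hAp, hAz⟩) ⟨hTz, hzp⟩
        · have hAz : ¬ G.Adj a z := fun h => hTz ((lc_S_Tadj hQa h1 hxa hz).1 h)
          have hnpz : ¬ G.Adj p z := by
            intro h
            obtain ⟨s, hs⟩ := hTw
            exact hTz ⟨s, hLA z w s hz hzp (G.symm _ _ h) hPw hwp hs.2.2 hs.1, hz, hs.2.2⟩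
          rw [lc_adj (Ne.symm hzp)]
          exact iff_of_false (by tauto) (fun h => hTz h.1)
  · have hnoP : ∀ x, P x → ¬ G.Adj a x := fun x hx h => haS ⟨x, G.symm _ _ h, hx, hQa⟩
    have hchar := lc_noP_inT hnoP hdisj
    have hTp : InT G P Q p := (hchar p).1 hT'p
    obtain ⟨w, hw1, hw2⟩ := hw'
    have hTw : InT G P Q w := (hchar w).1 hw2
    have hPw : P w := by obtain ⟨yw, hyw⟩ := hTw; exact hyw.2.1
    have hwp : w ≠ p := fun h => (G.lc a).loopless p (h ▸ hw1)
    have hApF : ¬ G.Adj a p := hnoP p hPp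
    have hpw : G.Adj p w := by
      rw [lc_adj (Ne.symm hwp)] at hw1; tauto
    have hc := h5 hTp ⟨w, hpw, hTw⟩
    intro z hz
    by_cases hzp : z = p
    · subst hzp
      exact iff_of_false ((G.lc a).loopless z) (fun h => h.2 rfl)
    · rw [lc_adj (Ne.symm hzp), hchar z]
      have := hc z hz
      tauto

end VMProof

namespace VMProof

variable {G : FGraph ℕ}

lemma lemA_lo (hinv : Inv G) (t : ℕ) :
    ∀ x w s, x ≤ t → x ≠ t → G.Adj x t → w ≤ t → w ≠ t → t < s → G.Adj w s → G.Adj x s := by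
  intro x w s hx hxt hadj hw hwt hs hws
  cases t with
  | zero => omega
  | succ k =>
    exact (hinv k).1 (x := x) (y := k+1) (x' := w) (y' := s)
      ⟨hadj, by omega, by omega⟩ ⟨hws, by omega, by omega⟩

lemma lemA_hi (hinv : Inv G) (t : ℕ) :
    ∀ x w s, t < x → x ≠ t+1 → G.Adj x (t+1) → t < w → w ≠ t+1 → s ≤ t →
      G.Adj w s → G.Adj x s := by
  intro x w s hx hxt hadj hw hwt hs hws
  have h1 := (hinv (t+1)).1
  have := h1 (x := s) (y := w) (x' := t+1) (y' := x)
    ⟨G.symm _ _ hws, by omega, by omega⟩ ⟨G.symm _ _ hadj, by omega, by omega⟩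
  exact G.symm _ _ this

lemma lc_inv (hinv : Inv G) (a : ℕ) : Inv (G.lc a) := by
  intro t
  obtain ⟨h1, h2, h3, h4, h5, h6⟩ := hinv t
  have h1' := c1_swap h1
  have hdisj : ∀ x : ℕ, ¬ ((fun x => x ≤ t) x ∧ (fun x => t < x) x) := by
    intro x ⟨ha, hb⟩; omega
  have hdisj' : ∀ x : ℕ, ¬ ((fun x => t < x) x ∧ (fun x => x ≤ t) x) := by
    intro x ⟨ha, hb⟩; omega
  have htot : ∀ x : ℕ, (fun x => x ≤ t) x ∨ (fun x => t < x) x := fun x => le_or_gt x t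
  have htot' : ∀ x : ℕ, (fun x => t < x) x ∨ (fun x => x ≤ t) x := fun x => (le_or_gt x t).symm
  have hLA := lemA_lo hinv t
  have hLA' := lemA_hi hinv t
  rcases le_or_gt a t with ha | ha
  · exact ⟨lc_C1_near hdisj ha h1,
      lc_C2_near hdisj ha htot (le_refl t) h1 h2 h5,
      lc_C2_far hdisj' ha htot' (Nat.lt_succ_self t) h1' h3,
      lc_C4_near hdisj ha (Nat.lt_succ_self t) h1 h4,
      lc_C5_near hdisj ha (le_refl t) h1 h2 h5 hLA,
      lc_C5_far hdisj' ha (Nat.lt_succ_self t) h1' h6 hLA'⟩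
  · exact ⟨c1_swap (lc_C1_near hdisj' ha h1'),
      lc_C2_far hdisj ha htot (le_refl t) h1 h2,
      lc_C2_near hdisj' ha htot' (Nat.lt_succ_self t) h1' h3 h6,
      c4_swap (lc_C4_near hdisj' ha (le_refl t) h1' (c4_swap h4)),
      lc_C5_far hdisj ha (le_refl t) h1 h5 hLA,
      lc_C5_near hdisj' ha (Nat.lt_succ_self t) h1' h3 h6 hLA'⟩

lemma del_inv (hinv : Inv G) (v : ℕ) : Inv (G.delete v) := by
  intro t
  obtain ⟨h1, h2, h3, h4, h5, h6⟩ := hinv t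
  have h1' := c1_swap h1
  have hdisj : ∀ x : ℕ, ¬ ((fun x => x ≤ t) x ∧ (fun x => t < x) x) := by
    intro x ⟨ha, hb⟩; omega
  exact ⟨del_C1 h1, del_C2 h1 h2, del_C2 h1' h3,
    del_C4 hdisj h1 h2 h3 h4, del_C5 h1 h5, del_C5 h1' h6⟩

lemma line_cr {n t x y : ℕ} :
    Cr (lineGraph n) (fun x => x ≤ t) (fun x => t < x) x y ↔
      (x = t ∧ y = t + 1 ∧ 1 ≤ t ∧ t + 1 ≤ n) := by
  unfold Cr lineGraph
  simp only [Finset.mem_Icc]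
  omega

lemma line_cr' {n t x y : ℕ} :
    Cr (lineGraph n) (fun x => t < x) (fun x => x ≤ t) x y ↔
      (x = t + 1 ∧ y = t ∧ 1 ≤ t ∧ t + 1 ≤ n) := by
  unfold Cr lineGraph
  simp only [Finset.mem_Icc]
  omega

lemma line_inv (n : ℕ) : Inv (lineGraph n) := by
  intro t
  refine ⟨?_, ?_, ?_, ?_, ?_, ?_⟩
  · intro x y x' y' hxy hx'y'
    rw [line_cr] at hxy hx'y'
    show _ ∈ Finset.Icc 1 n ∧ _ ∈ Finset.Icc 1 n ∧ _
    simp only [Finset.mem_Icc]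
    omega
  · rintro ⟨x0, y0, h0⟩ _
    rw [line_cr] at h0
    exact Or.inl ⟨t + 1, line_cr.2 ⟨rfl, rfl, h0.2.2⟩⟩
  · rintro ⟨x0, y0, h0⟩ _
    rw [line_cr'] at h0
    exact Or.inl ⟨t, line_cr'.2 ⟨rfl, rfl, h0.2.2⟩⟩
  · intro hncr ht ht1
    exfalso
    simp only [lineGraph, Finset.mem_Icc] at ht ht1
    exact hncr ⟨t, t + 1, line_cr.2 ⟨rfl, rfl, by omega, by omega⟩⟩
  · rintro hTp ⟨w, hw1, hw2⟩ z hz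
    exfalso
    obtain ⟨yw, hyw⟩ := hw2
    rw [line_cr] at hyw
    rw [hyw.1] at hw1
    exact (lineGraph n).loopless t hw1
  · rintro hTp ⟨w, hw1, hw2⟩ z hz
    exfalso
    obtain ⟨yw, hyw⟩ := hw2
    rw [line_cr'] at hyw
    rw [hyw.1] at hw1
    exact (lineGraph n).loopless (t + 1) hw1

lemma bell2_not_inv {a1 a2 b1 b2 : ℕ} (h1 : a1 < a2) (h2 : a2 < b1) (h3 : b1 < b2)
    (hadj : b1 = a2 + 1) : ¬ Inv (bell2 a1 a2 b1 b2) := by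
  intro h
  obtain ⟨_, _, _, h4, _, _⟩ := h a2
  have hncr : ¬ CrEx (bell2 a1 a2 b1 b2) (fun x => x ≤ a2) (fun x => a2 < x) := by
    rintro ⟨x, y, ⟨hne, hc⟩, hx, hy⟩
    rcases hc with ⟨rfl, rfl⟩ | ⟨rfl, rfl⟩ | ⟨rfl, rfl⟩ | ⟨rfl, rfl⟩ <;> omega
  have ha2 : a2 ∈ (bell2 a1 a2 b1 b2).verts := by
    simp [bell2, Finset.mem_insert]
  have hb1 : a2 + 1 ∈ (bell2 a1 a2 b1 b2).verts := by
    simp [bell2, Finset.mem_insert]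
    omega
  rcases h4 hncr ha2 hb1 with hN | hN
  · exact hN a1 ⟨by omega, Or.inr (Or.inl ⟨rfl, rfl⟩)⟩
  · exact hN b2 ⟨by omega, by
      right; right; left
      exact ⟨hadj.symm, rfl⟩⟩

lemma inv_of_vertexMinor {H G : FGraph ℕ} (h : IsVertexMinor H G) (hG : Inv G) :
    Inv H := by
  unfold IsVertexMinor at h
  induction h with
  | refl => exact hG
  | tail _ hstep ih =>
    rcases hstep with ⟨a, rfl⟩ | ⟨v, rfl⟩
    · exact lc_inv ih a
    · exact del_inv ih v

end VMProof


/-- two Bell pairs `{a1, a2}` and `{b1, b2}` with `a1 < a2 < b1 < b2`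
and `a2`, `b1` adjacent in `L_n` cannot be extracted from the line graph `L_n`. -/
theorem bell2_not_vertexMinor_line_adjacent (n a1 a2 b1 b2 : ℕ) (hn : 4 ≤ n)
    (h0 : 1 ≤ a1) (h1 : a1 < a2) (h2 : a2 < b1) (h3 : b1 < b2) (h4 : b2 ≤ n)
    (hadj : b1 = a2 + 1) :
    ¬ IsVertexMinor (bell2 a1 a2 b1 b2) (lineGraph n) := by
  intro hvm
  exact VMProof.bell2_not_inv h1 h2 h3 hadj
    (VMProof.inv_of_vertexMinor hvm (VMProof.line_inv n))
end
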